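/- arXiv:1303.4684 — 6 statements merged into one kernel-verified Lean document; each statement's English description precedes it below -/
import Mathlib

section
/- Let S ⊆ [0,1] be a meager set. Then there exists a homeomorphism φ : [0,1] → [0,1] such that the image φ(S) is FAP. -/
open Set

noncomputable section

/-- `A ⊆ ℝ` is *FAP* (free of arithmetic progressions): it contains no 3-term AP. -/
def FAP (A : Set ℝ) : Prop :=
  ¬ ∃ x d : ℝ, 0 < d ∧ x ∈ A ∧ x + d ∈ A ∧ x + 2 * d ∈ A

/-- `A ⊆ ℝ` is *RAP* (rich in arithmetic progressions): it contains APs of every length `n ≥ 3`. -/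
def RAP (A : Set ℝ) : Prop :=
  ∀ n : ℕ, 3 ≤ n → ∃ x d : ℝ, 0 < d ∧ ∀ k : ℕ, k < n → x + (k : ℝ) * d ∈ A

/-- The image in `ℝ` of a set `S ⊆ [0,1]` under a homeomorphism `φ : [0,1] → [0,1]`. -/
def imgH (φ : Set.Icc (0:ℝ) 1 ≃ₜ Set.Icc (0:ℝ) 1) (S : Set ℝ) : Set ℝ :=
  Subtype.val '' (⇑φ '' (Subtype.val ⁻¹' S))


private lemma exists_strictMono_fix (l : List (ℝ × ℝ))
    (hl : l.Pairwise (fun p q => p.1 < q.1 ∧ p.2 < q.2)) :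
    ∃ F : ℝ → ℝ, StrictMono F ∧ Function.Surjective F ∧ ∀ p ∈ l, F p.1 = p.2 := by
  induction l with
  | nil => exact ⟨id, strictMono_id, Function.surjective_id, by simp⟩
  | cons p l ih =>
    rcases l with _ | ⟨q, l⟩
    · refine ⟨fun x => x - p.1 + p.2, fun a b h => by dsimp; linarith,
        fun y => ⟨y - p.2 + p.1, by ring⟩, ?_⟩
      intro r hr
      simp only [List.mem_singleton] at hr
      subst hr; dsimp; ring
    · have hpq : p.1 < q.1 ∧ p.2 < q.2 := (List.pairwise_cons.mp hl).1 q (by simp)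
      have htail := (List.pairwise_cons.mp hl).2
      obtain ⟨F, hF, hFs, hFv⟩ := ih htail
      have hq1 : F q.1 = q.2 := hFv q (by simp)
      set s : ℝ := (q.2 - p.2) / (q.1 - p.1) with hs_def
      have hd1 : (0:ℝ) < q.1 - p.1 := by linarith [hpq.1]
      have hd2 : (0:ℝ) < q.2 - p.2 := by linarith [hpq.2]
      have hs : 0 < s := div_pos hd2 hd1
      set G : ℝ → ℝ := fun x => if x < q.1 then s * (x - q.1) + q.2 else F x with hG_def
      have hGq : G q.1 = q.2 := by simp [hG_def, hq1]
      have haff_lt : ∀ x, x < q.1 → s * (x - q.1) + q.2 < q.2 := by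
        intro x hx
        nlinarith
      have hGmono : StrictMono G := by
        intro a b hab
        by_cases ha : a < q.1
        · by_cases hb : b < q.1
          · simp only [hG_def, if_pos ha, if_pos hb]
            nlinarith
          · push_neg at hb
            have : G a < q.2 := by simpa [hG_def, if_pos ha] using haff_lt a ha
            have h2 : q.2 ≤ G b := by
              simp only [hG_def, if_neg (not_lt.mpr hb)]
              rw [← hq1]
              exact hF.monotone hb
            linarith
        · push_neg at ha
          have hb : ¬ b < q.1 := by push_neg; linarith
          simp only [hG_def, if_neg (not_lt.mpr ha), if_neg hb]
          exact hF hab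
      have hGsurj : Function.Surjective G := by
        intro t
        by_cases ht : t < q.2
        · refine ⟨q.1 + (t - q.2) / s, ?_⟩
          have hlt : q.1 + (t - q.2) / s < q.1 := by
            have : (t - q.2) / s < 0 := div_neg_of_neg_of_pos (by linarith) hs
            linarith
          simp only [hG_def, if_pos hlt]
          field_simp
          ring
        · obtain ⟨x, hx⟩ := hFs t
          have hxq : ¬ x < q.1 := by
            intro hxq
            have := hF hxq
            rw [hx, hq1] at this
            linarith
          exact ⟨x, by simp [hG_def, if_neg hxq, hx]⟩
      refine ⟨G, hGmono, hGsurj, ?_⟩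
      intro r hr
      rcases List.mem_cons.mp hr with rfl | hr
      · have hp1 : r.1 < q.1 := hpq.1
        simp only [hG_def, if_pos hp1, hs_def]
        field_simp
        ring
      · rcases List.mem_cons.mp hr with rfl | hr
        · exact hGq
        · have hqr : q.1 < r.1 := ((List.pairwise_cons.mp htail).1 r hr).1
          have : ¬ r.1 < q.1 := by linarith
          simp only [hG_def, if_neg this]
          exact hFv r (by simp [hr])

private lemma nwd_union {A B : Set ℝ} (hA : IsClosed A) (hB : IsClosed B)
    (hA' : IsNowhereDense A) (hB' : IsNowhereDense B) : IsNowhereDense (A ∪ B) := by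
  rw [(hA.union hB).isNowhereDense_iff]
  rw [hA.isNowhereDense_iff] at hA'
  rw [hB.isNowhereDense_iff] at hB'
  rw [← Set.not_nonempty_iff_eq_empty]
  rintro ⟨x, hx⟩
  rcases Set.eq_empty_or_nonempty (interior (A ∪ B) \ A) with hU | hU
  · have hsub : interior (A ∪ B) ⊆ A := fun y hy => by
      by_contra hyA
      exact Set.eq_empty_iff_forall_notMem.mp hU y ⟨hy, hyA⟩
    have : x ∈ interior A := interior_maximal hsub isOpen_interior hx
    rw [hA'] at this
    exact this
  · obtain ⟨y, hy⟩ := hU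
    have hUopen : IsOpen (interior (A ∪ B) \ A) := isOpen_interior.sdiff hA
    have hsub : interior (A ∪ B) \ A ⊆ B := by
      rintro z ⟨hz, hzA⟩
      rcases interior_subset hz with h | h
      · exact absurd h hzA
      · exact h
    have : y ∈ interior B := interior_maximal hsub hUopen hy
    rw [hB'] at this
    exact this

private lemma lt_of_steps (f : ℕ → ℝ) (M : ℕ) (h : ∀ i, i < M → f i < f (i + 1)) :
    ∀ i j, i < j → j ≤ M → f i < f j := by
  intro i j hij hjM
  induction j with
  | zero => omega
  | succ j ihj =>
    rcases Nat.lt_or_ge i j with h' | h'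
    · exact lt_trans (ihj h' (by omega)) (h j (by omega))
    · have : i = j := by omega
      subst this
      exact h i (by omega)

private lemma exists_piece (f : ℕ → ℝ) (M : ℕ) (z : ℝ) (hM1 : 1 ≤ M)
    (h0 : f 0 ≤ z) (hM : z ≤ f M) : ∃ i, i < M ∧ f i ≤ z ∧ z ≤ f (i+1) := by
  induction M with
  | zero => omega
  | succ M ih =>
    rcases Nat.eq_zero_or_pos M with rfl | hMpos
    · exact ⟨0, by omega, h0, hM⟩
    · by_cases hz : z ≤ f M
      · obtain ⟨i, h1, h2, h3⟩ := ih hMpos hz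
        exact ⟨i, by omega, h2, h3⟩
      · push_neg at hz
        exact ⟨M, by omega, le_of_lt hz, hM⟩

/-- Build a homeomorphism of `Icc 0 1` from a strictly monotone surjection of `ℝ`
fixing `0` and `1`. -/
private lemma homeo_of_strictMono (F : ℝ → ℝ) (hm : StrictMono F)
    (hs : Function.Surjective F) (h0 : F 0 = 0) (h1 : F 1 = 1) :
    ∃ φ : Set.Icc (0:ℝ) 1 ≃ₜ Set.Icc (0:ℝ) 1, ∀ x : Set.Icc (0:ℝ) 1, (φ x : ℝ) = F x := by
  set e : ℝ ≃o ℝ := StrictMono.orderIsoOfSurjective F hm hs with he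
  have hecoe : ⇑e = F := StrictMono.coe_orderIsoOfSurjective F hm hs
  have hmemF : ∀ x : Set.Icc (0:ℝ) 1, F x ∈ Set.Icc (0:ℝ) 1 := by
    intro x
    constructor
    · simpa [h0] using hm.monotone x.2.1
    · simpa [h1] using hm.monotone x.2.2
  have he0 : e 0 = 0 := by rw [hecoe]; exact h0
  have he1 : e 1 = 1 := by rw [hecoe]; exact h1
  have hsymm0 : e.symm 0 = 0 := by rw [OrderIso.symm_apply_eq, he0]
  have hsymm1 : e.symm 1 = 1 := by rw [OrderIso.symm_apply_eq, he1]
  have hmemG : ∀ y : Set.Icc (0:ℝ) 1, e.symm ↑y ∈ Set.Icc (0:ℝ) 1 := by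
    intro y
    constructor
    · simpa [hsymm0] using e.symm.monotone y.2.1
    · simpa [hsymm1] using e.symm.monotone y.2.2
  have hFcont : Continuous F := hecoe ▸ e.continuous
  refine ⟨{ toFun := fun x => ⟨F ↑x, hmemF x⟩
            invFun := fun y => ⟨e.symm ↑y, hmemG y⟩
            left_inv := ?_
            right_inv := ?_
            continuous_toFun := ?_
            continuous_invFun := ?_ }, fun x => rfl⟩
  · intro x
    ext
    simp only [← hecoe]
    exact e.symm_apply_apply ↑x
  · intro y
    ext
    simp only [← hecoe]
    exact e.apply_symm_apply ↑y
  · exact (hFcont.comp continuous_subtype_val).subtype_mk _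
  · exact (e.symm.continuous.comp continuous_subtype_val).subtype_mk _

set_option maxHeartbeats 2000000 in
open Classical in
/-- The key finite perturbation: a strictly monotone surjection of `ℝ` fixing `0,1`,
`ε`-close to the identity on `[0,1]`, pushing `K` into a set with no 3-term AP of gap `≥ δ`. -/
private lemma perturb (K : Set ℝ) (hK : K ⊆ Icc 0 1)
    (hfree : ∀ a b : ℝ, 0 ≤ a → b ≤ 1 → a < b →
      ∃ a' b' : ℝ, a < a' ∧ a' < b' ∧ b' < b ∧ Icc a' b' ∩ K = ∅)
    (ε δ : ℝ) (hε : 0 < ε) (hδ : 0 < δ) :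
    ∃ F : ℝ → ℝ, StrictMono F ∧ Function.Surjective F ∧ F 0 = 0 ∧ F 1 = 1 ∧
      (∀ z ∈ Icc (0:ℝ) 1, |F z - z| ≤ ε) ∧
      ∀ a ∈ K, ∀ b ∈ K, ∀ c ∈ K, F a + F c = 2 * F b → δ ≤ F b - F a → False := by
  obtain ⟨N0, hN0⟩ := exists_nat_gt (9 / min ε δ)
  set N := N0 + 2 with hN_def
  have hN2 : 2 ≤ N := by omega
  have hNpos : (0:ℝ) < N := by positivity
  have hmin : 0 < min ε δ := lt_min hε hδ
  have hN9 : 9 / (N:ℝ) < min ε δ := by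
    have h1 : 9 / min ε δ < (N:ℝ) := by
      have : (N0:ℝ) ≤ (N:ℝ) := by exact_mod_cast Nat.le_add_right N0 2
      linarith
    have h2 : 9 < (N:ℝ) * min ε δ := by
      rw [div_lt_iff₀ hmin] at h1; linarith
    rw [div_lt_iff₀ hNpos]; linarith
  -- buffers in each cell
  have hcell : ∀ j : ℕ, ∃ uv : ℝ × ℝ, j < N →
      ((j:ℝ)/N < uv.1 ∧ uv.1 < uv.2 ∧ uv.2 < ((j:ℝ)+1)/N ∧ Icc uv.1 uv.2 ∩ K = ∅) := by
    intro j
    by_cases hj : j < N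
    · have h0j : (0:ℝ) ≤ (j:ℝ)/N := by positivity
      have h1j : ((j:ℝ)+1)/N ≤ 1 := by
        rw [div_le_one hNpos]
        have : (j:ℝ)+1 ≤ (N:ℝ) := by exact_mod_cast Nat.succ_le_of_lt hj
        linarith
      have hlt : (j:ℝ)/N < ((j:ℝ)+1)/N :=
        div_lt_div_of_pos_right (by linarith) hNpos
      obtain ⟨a', b', h1, h2, h3, h4⟩ := hfree _ _ h0j h1j hlt
      exact ⟨(a', b'), fun _ => ⟨h1, h2, h3, h4⟩⟩
    · exact ⟨(0,0), fun h => absurd h hj⟩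
  choose uv huv using hcell
  set u : ℕ → ℝ := fun j => (uv j).1 with hu_def
  set v : ℕ → ℝ := fun j => (uv j).2 with hv_def
  -- basic cell bounds
  have hcb : ∀ j, j < N → (j:ℝ)/N < u j ∧ u j < v j ∧ v j < ((j:ℝ)+1)/N ∧ Icc (u j) (v j) ∩ K = ∅ :=
    fun j hj => huv j hj
  -- choose the generic centers
  have hcen : ∀ m : ℕ, ∃ c : ℕ → ℝ,
      (∀ j, 1 ≤ j → j ≤ m → j < N → v (j-1) < c j ∧ c j < u j) ∧
      (∀ x y z : ℝ,
        (x = 0 ∨ x = 1 ∨ ∃ j, 1 ≤ j ∧ j ≤ m ∧ j < N ∧ c j = x) →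
        (y = 0 ∨ y = 1 ∨ ∃ j, 1 ≤ j ∧ j ≤ m ∧ j < N ∧ c j = y) →
        (z = 0 ∨ z = 1 ∨ ∃ j, 1 ≤ j ∧ j ≤ m ∧ j < N ∧ c j = z) →
        x + z = 2*y → x = z) := by
    intro m
    induction m with
    | zero =>
      refine ⟨fun _ => 0, by omega, ?_⟩
      rintro x y z (rfl|rfl|⟨j,hj⟩) (rfl|rfl|⟨j,hj⟩) (rfl|rfl|⟨j,hj⟩) hxz <;>
        first | rfl | linarith | omega
    | succ m ihm =>
      obtain ⟨c, hwin, hAP⟩ := ihm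
      by_cases hm1 : m + 1 < N
      · -- the old finite set of relevant values
        set Sm : Set ℝ := {0, 1} ∪ c '' {j | 1 ≤ j ∧ j ≤ m ∧ j < N} with hSm_def
        have hSmfin : Sm.Finite := by
          apply Set.Finite.union
          · exact (Set.finite_singleton 0).insert 1 |>.subset (by intro x hx; rcases hx with rfl|rfl <;> simp)
          · exact Set.Finite.image c ((Set.finite_Icc 1 m).subset (fun j hj => ⟨hj.1, hj.2.1⟩))
        have hmem_Sm : ∀ w : ℝ, (w = 0 ∨ w = 1 ∨ ∃ j, 1 ≤ j ∧ j ≤ m ∧ j < N ∧ c j = w) ↔ w ∈ Sm := by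
          intro w
          constructor
          · rintro (rfl|rfl|⟨j,h1,h2,h3,h4⟩)
            · exact Or.inl (Or.inl rfl)
            · exact Or.inl (Or.inr rfl)
            · exact Or.inr ⟨j, ⟨h1,h2,h3⟩, h4⟩
          · rintro (h|⟨j,hj,h4⟩)
            · rcases h with rfl|rfl
              · exact Or.inl rfl
              · exact Or.inr (Or.inl rfl)
            · exact Or.inr (Or.inr ⟨j, hj.1, hj.2.1, hj.2.2, h4⟩)
        set Bad : Set ℝ := Sm ∪ (Set.image2 (fun y z => 2*y - z) Sm Sm) ∪
            (Set.image2 (fun y z => (y+z)/2) Sm Sm) with hBad_def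
        have hBadfin : Bad.Finite :=
          ((hSmfin.union (Set.Finite.image2 _ hSmfin hSmfin)).union (Set.Finite.image2 _ hSmfin hSmfin))
        have hwinlt : v m < u (m+1) := by
          have h1 := (hcb m (by omega)).2.2.1
          have h2 := (hcb (m+1) hm1).1
          have : ((m+1:ℕ):ℝ) = (m:ℝ) + 1 := by push_cast; ring
          rw [this] at h2
          linarith
        have hinf : (Set.Ioo (v m) (u (m+1))).Infinite := Set.infinite_coe_iff.mp (Set.Ioo.infinite hwinlt)
        obtain ⟨t, htIoo, htBad⟩ := (hinf.diff hBadfin).nonempty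
        refine ⟨Function.update c (m+1) t, ?_, ?_⟩
        · intro j h1 h2 h3
          rcases Nat.lt_or_ge j (m+1) with hj | hj
          · rw [Function.update_of_ne (by omega)]
            exact hwin j h1 (by omega) h3
          · have : j = m + 1 := by omega
            subst this
            rw [Function.update_self]
            simpa using htIoo
        · have hconv : ∀ w : ℝ,
              (w = 0 ∨ w = 1 ∨ ∃ j, 1 ≤ j ∧ j ≤ m+1 ∧ j < N ∧ Function.update c (m+1) t j = w) →
              (w ∈ Sm ∨ w = t) := by
            rintro w (rfl|rfl|⟨j,h1,h2,h3,h4⟩)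
            · exact Or.inl (Or.inl (Or.inl rfl))
            · exact Or.inl (Or.inl (Or.inr rfl))
            · rcases Nat.lt_or_ge j (m+1) with hj | hj
              · rw [Function.update_of_ne (by omega)] at h4
                exact Or.inl ((hmem_Sm w).mp (Or.inr (Or.inr ⟨j, h1, by omega, h3, h4⟩)))
              · have : j = m+1 := by omega
                subst this
                rw [Function.update_self] at h4
                exact Or.inr h4.symm
          have hSmAP : ∀ x y z : ℝ, x ∈ Sm → y ∈ Sm → z ∈ Sm → x + z = 2*y → x = z := by
            intro x y z hx hy hz
            exact hAP x y z ((hmem_Sm x).mpr hx) ((hmem_Sm y).mpr hy) ((hmem_Sm z).mpr hz)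
          have htnotSm : t ∉ Sm := fun h => htBad (Or.inl (Or.inl h))
          intro x y z hx hy hz hxz
          rcases hconv x hx with hx' | rfl
          · rcases hconv y hy with hy' | rfl
            · rcases hconv z hz with hz' | rfl
              · exact hSmAP x y z hx' hy' hz' hxz
              · -- z = t, x y ∈ Sm : t = 2y - x
                exact absurd (Or.inl (Or.inr ⟨y, hy', x, hx', show 2*y - x = _ by linarith⟩)) htBad
            · rcases hconv z hz with hz' | rfl
              · -- y = t : t = (x+z)/2
                exact absurd (Or.inr ⟨x, hx', z, hz', show (x+z)/2 = _ by linarith⟩) htBad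
              · -- y = z = t : x = t
                linarith
          · rcases hconv y hy with hy' | rfl
            · rcases hconv z hz with hz' | rfl
              · -- x = t : t = 2y - z
                exact absurd (Or.inl (Or.inr ⟨y, hy', z, hz', show 2*y - z = _ by linarith⟩)) htBad
              · -- x = z = t
                rfl
            · -- x = y = t : z = t
              linarith
      · -- no new center needed
        refine ⟨c, fun j h1 h2 h3 => hwin j h1 (by omega) h3, ?_⟩
        intro x y z hx hy hz hxz
        have conv : ∀ w : ℝ, (w = 0 ∨ w = 1 ∨ ∃ j, 1 ≤ j ∧ j ≤ m+1 ∧ j < N ∧ c j = w) →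
            (w = 0 ∨ w = 1 ∨ ∃ j, 1 ≤ j ∧ j ≤ m ∧ j < N ∧ c j = w) := by
          rintro w (rfl|rfl|⟨j,h1,h2,h3,h4⟩)
          · exact Or.inl rfl
          · exact Or.inr (Or.inl rfl)
          · exact Or.inr (Or.inr ⟨j, h1, by omega, h3, h4⟩)
        exact hAP x y z (conv x hx) (conv y hy) (conv z hz) hxz
  obtain ⟨c, hcwin, hcAP⟩ := hcen N
  set cc : ℕ → ℝ := fun j => if j = 0 then 0 else if N ≤ j then 1 else c j with hcc_def
  have hcc0 : cc 0 = 0 := by simp [hcc_def]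
  have hccN : ∀ j, N ≤ j → cc j = 1 := by
    intro j hj
    simp only [hcc_def]
    rw [if_neg (by omega), if_pos hj]
  have hccmid : ∀ j, 1 ≤ j → j < N → cc j = c j := by
    intro j h1 h2
    simp only [hcc_def]
    rw [if_neg (by omega), if_neg (by omega)]
  have hcwin' : ∀ j, 1 ≤ j → j < N → v (j-1) < c j ∧ c j < u j :=
    fun j h1 h2 => hcwin j h1 (by omega) h2
  -- cc is strictly increasing on 0..N
  have hccstep : ∀ j, j < N → cc j < cc (j+1) := by
    intro j hj
    rcases Nat.eq_or_lt_of_le (Nat.one_le_iff_ne_zero.mpr (by omega : j + 1 ≠ 0)) with h1 | h1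
    · -- j = 0
      have hj0 : j = 0 := by omega
      subst hj0
      rw [hcc0]
      rcases Nat.lt_or_ge 1 N with hN1 | hN1
      · rw [hccmid 1 le_rfl hN1]
        have w := hcwin' 1 le_rfl hN1
        have b0 := hcb 0 (by omega)
        have : ((0:ℕ):ℝ)/N = 0 := by simp
        nlinarith [b0.1, b0.2.1, w.1]
      · omega
    · -- j ≥ 1
      have hj1 : 1 ≤ j := by omega
      rw [hccmid j hj1 hj]
      have w := hcwin' j hj1 hj
      have bj := hcb j hj
      rcases Nat.lt_or_ge (j+1) N with hN1 | hN1
      · rw [hccmid (j+1) (by omega) hN1]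
        have w2 := hcwin' (j+1) (by omega) hN1
        have : v ((j+1)-1) = v j := by norm_num
        rw [this] at w2
        linarith [w.2, bj.2.1, w2.1]
      · rw [hccN (j+1) hN1]
        have hjN : j + 1 = N := by omega
        have : ((j:ℝ)+1)/N ≤ 1 := by
          rw [div_le_one hNpos]
          exact_mod_cast Nat.le_of_eq hjN
        linarith [w.2, bj.2.1, bj.2.2.1]
  have hccmono : ∀ i j, i < j → j ≤ N → cc i < cc j := lt_of_steps cc N hccstep
  -- membership of cc values into the AP-free family
  have hccQ : ∀ j, j ≤ N → (cc j = 0 ∨ cc j = 1 ∨ ∃ j', 1 ≤ j' ∧ j' ≤ N ∧ j' < N ∧ c j' = cc j) := by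
    intro j hj
    rcases Nat.eq_zero_or_pos j with rfl | h1
    · exact Or.inl hcc0
    · rcases Nat.eq_or_lt_of_le hj with h2 | h2
      · exact Or.inr (Or.inl (by rw [h2]; exact hccN N le_rfl))
      · exact Or.inr (Or.inr ⟨j, h1, by omega, h2, (hccmid j h1 h2).symm⟩)
  have hccAP : ∀ i j l, i ≤ N → j ≤ N → l ≤ N → cc i + cc l = 2 * cc j → cc i = cc l :=
    fun i j l hi hj hl h => hcAP (cc i) (cc j) (cc l) (hccQ i hi) (hccQ j hj) (hccQ l hl) h
  -- the Finset of centers and the AP margin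
  set CF : Finset ℝ := (Finset.range (N+1)).image cc with hCF_def
  set T : Finset (ℝ × ℝ × ℝ) :=
    (CF ×ˢ CF ×ˢ CF).filter (fun t => ¬(t.1 = t.2.1 ∧ t.2.1 = t.2.2)) with hT_def
  have hTne : T.Nonempty := by
    refine ⟨(0, 0, 1), ?_⟩
    have h0 : (0:ℝ) ∈ CF := by
      rw [hCF_def, Finset.mem_image]
      exact ⟨0, by simp, hcc0⟩
    have h1 : (1:ℝ) ∈ CF := by
      rw [hCF_def, Finset.mem_image]
      exact ⟨N, by simp, hccN N le_rfl⟩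
    exact Finset.mem_filter.mpr ⟨Finset.mem_product.mpr ⟨h0, Finset.mem_product.mpr ⟨h0, h1⟩⟩, by simp⟩
  have hCFAP : ∀ x ∈ CF, ∀ y ∈ CF, ∀ z ∈ CF, x + z = 2*y → x = z := by
    intro x hx y hy z hz h
    rw [hCF_def, Finset.mem_image] at hx hy hz
    obtain ⟨i, hi, rfl⟩ := hx
    obtain ⟨j, hj, rfl⟩ := hy
    obtain ⟨l, hl, rfl⟩ := hz
    rw [Finset.mem_range] at hi hj hl
    exact hccAP i j l (by omega) (by omega) (by omega) h
  set m0 : ℝ := T.inf' hTne (fun t => |t.1 + t.2.2 - 2*t.2.1|) with hm0_def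
  have hm0pos : 0 < m0 := by
    rw [hm0_def, Finset.lt_inf'_iff]
    rintro ⟨x, y, z⟩ hb
    simp only [hT_def, Finset.mem_filter, Finset.mem_product] at hb
    obtain ⟨⟨hx, hy, hz⟩, hne⟩ := hb
    dsimp only
    rw [abs_pos]
    intro h0
    have hxz : x + z = 2*y := by linarith
    have h1 : x = z := hCFAP x hx y hy z hz hxz
    exact hne ⟨by linarith, by linarith⟩
  have hm0le : ∀ x ∈ CF, ∀ y ∈ CF, ∀ z ∈ CF, ¬(x = y ∧ y = z) → m0 ≤ |x + z - 2*y| := by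
    intro x hx y hy z hz hne
    rw [hm0_def]
    have hmemT : ((x, y, z) : ℝ × ℝ × ℝ) ∈ T := by
      rw [hT_def, Finset.mem_filter]
      refine ⟨?_, by exact hne⟩
      rw [Finset.mem_product]
      exact ⟨hx, Finset.mem_product.mpr ⟨hy, hz⟩⟩
    exact Finset.inf'_le _ hmemT
  set g1 : ℝ := (Finset.range N).inf' (show (Finset.range N).Nonempty from ⟨0, Finset.mem_range.mpr (by omega)⟩) (fun j => cc (j+1) - cc j) with hg1_def
  have hg1pos : 0 < g1 := by
    rw [hg1_def, Finset.lt_inf'_iff]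
    intro j hj
    rw [Finset.mem_range] at hj
    have := hccstep j hj
    linarith
  have hg1le : ∀ j, j < N → g1 ≤ cc (j+1) - cc j := by
    intro j hj
    rw [hg1_def]
    exact Finset.inf'_le _ (Finset.mem_range.mpr hj)
  set ρ : ℝ := min (min (g1/3) (m0/5)) (min (δ/3) (1/N)) with hρ_def
  have hρpos : 0 < ρ := by
    rw [hρ_def]
    apply lt_min (lt_min (by linarith) (by linarith)) (lt_min (by linarith) (by positivity))
  have hρg1 : ρ ≤ g1/3 := le_trans (min_le_left _ _) (min_le_left _ _)
  have hρm0 : ρ ≤ m0/5 := le_trans (min_le_left _ _) (min_le_right _ _)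
  have hρδ : ρ ≤ δ/3 := le_trans (min_le_right _ _) (min_le_left _ _)
  have hρN : ρ ≤ 1/N := le_trans (min_le_right _ _) (min_le_right _ _)
  -- the partitions
  set X : ℕ → ℝ := fun i => if i = 0 then 0 else if 2*N+1 ≤ i then 1 else
      if i % 2 = 1 then u (i/2) else v (i/2 - 1) with hX_def
  set Y : ℕ → ℝ := fun i => if i = 0 then 0 else if 2*N+1 ≤ i then 1 else
      if i % 2 = 1 then cc (i/2) + ρ else cc (i/2) - ρ with hY_def
  have hX0 : X 0 = 0 := by simp [hX_def]
  have hY0 : Y 0 = 0 := by simp [hY_def]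
  have hXlast : X (2*N+1) = 1 := by
    simp only [hX_def]
    rw [if_neg (by omega), if_pos (by omega)]
  have hYlast : Y (2*N+1) = 1 := by
    simp only [hY_def]
    rw [if_neg (by omega), if_pos (by omega)]
  have hXodd : ∀ j, j < N → X (2*j+1) = u j := by
    intro j hj
    simp only [hX_def]
    rw [if_neg (by omega), if_neg (by omega), if_pos (by omega)]
    congr 1
    omega
  have hXeven : ∀ j, 1 ≤ j → j ≤ N → X (2*j) = v (j-1) := by
    intro j h1 h2
    simp only [hX_def]
    rw [if_neg (by omega), if_neg (by omega), if_neg (by omega)]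
    congr 1
    omega
  have hYodd : ∀ j, j < N → Y (2*j+1) = cc j + ρ := by
    intro j hj
    simp only [hY_def]
    rw [if_neg (by omega), if_neg (by omega), if_pos (by omega)]
    congr 2
    omega
  have hYeven : ∀ j, 1 ≤ j → j ≤ N → Y (2*j) = cc j - ρ := by
    intro j h1 h2
    simp only [hY_def]
    rw [if_neg (by omega), if_neg (by omega), if_neg (by omega)]
    congr 2
    omega
  -- bounds with shifted index
  have hbnd : ∀ j, 1 ≤ j → j ≤ N → ((j:ℝ)-1)/N < u (j-1) ∧ u (j-1) < v (j-1) ∧ v (j-1) < (j:ℝ)/N := by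
    intro j h1 h2
    have hj : j - 1 < N := by omega
    have hb := hcb (j-1) hj
    have hc : ((j-1:ℕ):ℝ) = (j:ℝ) - 1 := by
      push_cast [Nat.cast_sub h1]
      ring
    rw [hc] at hb
    refine ⟨hb.1, hb.2.1, ?_⟩
    have : (j:ℝ) - 1 + 1 = (j:ℝ) := by ring
    rw [this] at hb
    exact hb.2.2.1
  have hccbound : ∀ j, j ≤ N → ((j:ℝ)-1)/N ≤ cc j ∧ cc j ≤ ((j:ℝ)+1)/N := by
    intro j hj
    rcases Nat.eq_zero_or_pos j with rfl | h1
    · rw [hcc0]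
      have h0 : ((0:ℕ):ℝ) = 0 := by norm_num
      rw [h0]
      constructor
      · apply div_nonpos_of_nonpos_of_nonneg <;> linarith
      · positivity
    · rcases Nat.eq_or_lt_of_le hj with h2 | h2
      · rw [h2, hccN N le_rfl]
        constructor
        · rw [div_le_one hNpos]; linarith
        · rw [le_div_iff₀ hNpos]; linarith
      · rw [hccmid j h1 h2]
        have w := hcwin' j h1 h2
        have hb1 := hbnd j h1 (by omega)
        have hb2 := hcb j h2
        constructor
        · linarith [hb1.1, hb1.2.1, w.1]
        · linarith [w.2, hb2.2.1, hb2.2.2.1]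
  -- step lemmas
  have hXstep : ∀ i, i < 2*N+1 → X i < X (i+1) := by
    intro i hi
    rcases Nat.eq_zero_or_pos i with rfl | hipos
    · rw [hX0]
      have h1 : X 1 = u 0 := by
        have := hXodd 0 (by omega)
        norm_num at this
        exact this
      rw [h1]
      have := (hcb 0 (by omega)).1
      norm_num at this
      linarith [this]
    · rcases Nat.even_or_odd i with ⟨j, hj⟩ | ⟨j, hj⟩
      · have hij : i = 2*j := by omega
        have hj1 : 1 ≤ j := by omega
        have hjN : j ≤ N := by omega
        rw [hij, hXeven j hj1 hjN]
        rcases Nat.lt_or_ge j N with hlt | hge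
        · have : 2*j+1 = 2*j+1 := rfl
          rw [show (2*j)+1 = 2*j+1 from rfl, hXodd j hlt]
          have hb := hbnd j hj1 hjN
          have hb2 := (hcb j hlt).1
          linarith [hb.2.2]
        · have hjN' : j = N := by omega
          rw [hjN', hXlast]
          have hb := hbnd N (by omega) le_rfl
          have hNN : (N:ℝ)/N = 1 := div_self (ne_of_gt hNpos)
          linarith [hb.2.2]
      · have hij : i = 2*j+1 := by omega
        have hjN : j < N := by omega
        rw [hij, hXodd j hjN]
        have : 2*j+1+1 = 2*(j+1) := by omega
        rw [this, hXeven (j+1) (by omega) (by omega)]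
        have : (j+1) - 1 = j := by omega
        rw [this]
        exact (hcb j hjN).2.1
  have hYstep : ∀ i, i < 2*N+1 → Y i < Y (i+1) := by
    intro i hi
    rcases Nat.eq_zero_or_pos i with rfl | hipos
    · rw [hY0]
      have h1 : Y 1 = cc 0 + ρ := by
        have := hYodd 0 (by omega)
        norm_num at this
        exact this
      rw [h1, hcc0]
      linarith
    · rcases Nat.even_or_odd i with ⟨j, hj⟩ | ⟨j, hj⟩
      · have hij : i = 2*j := by omega
        have hj1 : 1 ≤ j := by omega
        have hjN : j ≤ N := by omega
        rw [hij, hYeven j hj1 hjN]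
        rcases Nat.lt_or_ge j N with hlt | hge
        · rw [show (2*j)+1 = 2*j+1 from rfl, hYodd j hlt]
          linarith
        · have hjN' : j = N := by omega
          rw [hjN', hYlast, hccN N le_rfl]
          linarith
      · have hij : i = 2*j+1 := by omega
        have hjN : j < N := by omega
        rw [hij, hYodd j hjN]
        have h3 : 2*j+1+1 = 2*(j+1) := by omega
        rw [h3, hYeven (j+1) (by omega) (by omega)]
        have hg := hg1le j hjN
        linarith [hρg1]
  -- distance of the two partitions, and mesh
  have hXY : ∀ i, i ≤ 2*N+1 → |Y i - X i| ≤ 3/N := by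
    intro i hi
    rcases Nat.eq_zero_or_pos i with rfl | hipos
    · rw [hX0, hY0]
      simp
      positivity
    · rcases Nat.eq_or_lt_of_le hi with h2 | h2
      · rw [h2, hXlast, hYlast]
        simp
        positivity
      · rcases Nat.even_or_odd i with ⟨j, hj⟩ | ⟨j, hj⟩
        · have hij : i = 2*j := by omega
          have hj1 : 1 ≤ j := by omega
          have hjN : j ≤ N := by omega
          rw [hij, hXeven j hj1 hjN, hYeven j hj1 hjN]
          have hb := hbnd j hj1 hjN
          have hcj := hccbound j hjN
          rw [abs_le]
          have e1 : ((j:ℝ)-1)/N = (j:ℝ)/N - 1/N := by ring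
          have e2 : ((j:ℝ)+1)/N = (j:ℝ)/N + 1/N := by ring
          have e3 : (3:ℝ)/N = 3*(1/N) := by ring
          constructor <;>
            linarith [hb.1, hb.2.1, hb.2.2, hcj.1, hcj.2, hρN, hρpos, e1, e2, e3]
        · have hij : i = 2*j+1 := by omega
          have hjN : j < N := by omega
          rw [hij, hXodd j hjN, hYodd j hjN]
          have hb := hcb j hjN
          have hcj := hccbound j (by omega)
          rw [abs_le]
          have e1 : ((j:ℝ)-1)/N = (j:ℝ)/N - 1/N := by ring
          have e2 : ((j:ℝ)+1)/N = (j:ℝ)/N + 1/N := by ring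
          have e3 : (3:ℝ)/N = 3*(1/N) := by ring
          constructor <;>
            linarith [hb.1, hb.2.1, hb.2.2.1, hcj.1, hcj.2, hρN, hρpos, e1, e2, e3]
  have hXmesh : ∀ i, i < 2*N+1 → X (i+1) - X i ≤ 2/N := by
    intro i hi
    rcases Nat.eq_zero_or_pos i with rfl | hipos
    · rw [hX0]
      have h1 : X 1 = u 0 := by
        have := hXodd 0 (by omega); norm_num at this; exact this
      rw [h1]
      have hb := hcb 0 (by omega)
      have e0 : (((0:ℕ):ℝ)+1)/N = 1/N := by norm_num
      have e2 : (2:ℝ)/N = 2*(1/N) := by ring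
      have e3 : (0:ℝ) < 1/N := by positivity
      linarith [hb.1, hb.2.1, hb.2.2.1, e0, e2, e3]
    · rcases Nat.even_or_odd i with ⟨j, hj⟩ | ⟨j, hj⟩
      · have hij : i = 2*j := by omega
        have hj1 : 1 ≤ j := by omega
        have hjN : j ≤ N := by omega
        rw [hij, hXeven j hj1 hjN]
        have hb := hbnd j hj1 hjN
        rcases Nat.lt_or_ge j N with hlt | hge
        · rw [show (2*j)+1 = 2*j+1 from rfl, hXodd j hlt]
          have hb2 := hcb j hlt
          have e1 : ((j:ℝ)-1)/N = (j:ℝ)/N - 1/N := by ring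
          have e2 : ((j:ℝ)+1)/N = (j:ℝ)/N + 1/N := by ring
          rw [e1] at hb
          rw [e2] at hb2
          have : (2:ℝ)/N = 1/N + 1/N := by ring
          rw [this]
          linarith [hb.1, hb.2.2, hb2.2.2.1, hb2.1]
        · have hjN' : j = N := by omega
          rw [hjN', hXlast]
          have hb2 := hbnd N (by omega) le_rfl
          have hNN : (N:ℝ)/N = 1 := div_self (ne_of_gt hNpos)
          have e1 : ((N:ℝ)-1)/N = (N:ℝ)/N - 1/N := by ring
          have e2 : (2:ℝ)/N = 2*(1/N) := by ring
          linarith [hb2.1, hb2.2.1, hb2.2.2, e1, e2, hNN, hNpos]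
      · have hij : i = 2*j+1 := by omega
        have hjN : j < N := by omega
        rw [hij, hXodd j hjN]
        have h3 : 2*j+1+1 = 2*(j+1) := by omega
        rw [h3, hXeven (j+1) (by omega) (by omega)]
        have h4 : (j+1) - 1 = j := by omega
        rw [h4]
        have hb := hcb j hjN
        have e2 : ((j:ℝ)+1)/N = (j:ℝ)/N + 1/N := by ring
        rw [e2] at hb
        have : (1:ℝ)/N ≤ 2/N := by gcongr; norm_num
        linarith [hb.1, hb.2.2.1]
  -- piece location
  have hloc : ∀ z, z ∈ Icc (0:ℝ) 1 → ∃ i, i ≤ 2*N ∧ X i ≤ z ∧ z ≤ X (i+1) := by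
    intro z hz
    obtain ⟨i, h1, h2, h3⟩ := exists_piece X (2*N+1) z (by omega)
      (by rw [hX0]; exact hz.1) (by rw [hXlast]; exact hz.2)
    exact ⟨i, by omega, h2, h3⟩
  -- the interpolating map
  set l : List (ℝ × ℝ) := (List.range (2*N+2)).map (fun i => (X i, Y i)) with hl_def
  have hSX := lt_of_steps X (2*N+1) hXstep
  have hSY := lt_of_steps Y (2*N+1) hYstep
  have hlpair : l.Pairwise (fun p q => p.1 < q.1 ∧ p.2 < q.2) := by
    rw [hl_def, List.pairwise_map]
    refine List.Pairwise.imp_of_mem ?_ (List.pairwise_lt_range : (List.range (2*N+2)).Pairwise (· < ·))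
    intro a b ha hb hab
    rw [List.mem_range] at ha hb
    exact ⟨hSX a b hab (by omega), hSY a b hab (by omega)⟩
  obtain ⟨F, hFm, hFs, hFv⟩ := exists_strictMono_fix l hlpair
  have hFX : ∀ i, i ≤ 2*N+1 → F (X i) = Y i := by
    intro i hi
    exact hFv (X i, Y i) (by rw [hl_def]; exact List.mem_map.mpr ⟨i, List.mem_range.mpr (by omega), rfl⟩)
  have hF0 : F 0 = 0 := by have h := hFX 0 (by omega); rwa [hX0, hY0] at h
  have hF1 : F 1 = 1 := by have h := hFX (2*N+1) le_rfl; rwa [hXlast, hYlast] at h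
  refine ⟨F, hFm, hFs, hF0, hF1, ?_, ?_⟩
  · -- closeness to the identity
    intro z hz
    obtain ⟨i, hi, h1, h2⟩ := hloc z hz
    have e1 : F (X i) = Y i := hFX i (by omega)
    have e2 : F (X (i+1)) = Y (i+1) := hFX (i+1) (by omega)
    have l1 : Y i ≤ F z := by rw [← e1]; exact hFm.monotone h1
    have l2 : F z ≤ Y (i+1) := by rw [← e2]; exact hFm.monotone h2
    have b1 := hXY i (by omega)
    have b2 := hXY (i+1) (by omega)
    have b3 := hXmesh i (by omega)
    have hεN : 5/(N:ℝ) ≤ ε := by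
      have h9 : (9:ℝ)/N < ε := lt_of_lt_of_le hN9 (min_le_left _ _)
      have h5 : (5:ℝ)/N ≤ 9/N := by gcongr; norm_num
      linarith
    rw [abs_le] at b1 b2 ⊢
    have q2 : (2:ℝ)/N = 2*(1/N) := by ring
    have q3 : (3:ℝ)/N = 3*(1/N) := by ring
    have q5 : (5:ℝ)/N = 5*(1/N) := by ring
    constructor
    · linarith [b1.1, b1.2, b3, l1, h1, h2, q2, q3, q5]
    · linarith [b2.1, b2.2, b3, l2, h1, h2, q2, q3, q5]
  · -- no arithmetic progression with gap ≥ δ in F '' K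
    intro a ha b hb c' hc' heq hge
    have hcov : ∀ w, w ∈ K → ∃ j, j ≤ N ∧ |F w - cc j| ≤ ρ := by
      intro w hw
      obtain ⟨i, hi, h1, h2⟩ := hloc w (hK hw)
      have e1 : F (X i) = Y i := hFX i (by omega)
      have e2 : F (X (i+1)) = Y (i+1) := hFX (i+1) (by omega)
      have l1 : Y i ≤ F w := by rw [← e1]; exact hFm.monotone h1
      have l2 : F w ≤ Y (i+1) := by rw [← e2]; exact hFm.monotone h2
      rcases Nat.eq_zero_or_pos i with rfl | hipos
      · refine ⟨0, by omega, ?_⟩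
        rw [hY0] at l1
        have hY1 : Y 1 = cc 0 + ρ := by
          have := hYodd 0 (by omega); norm_num at this; exact this
        rw [show (0:ℕ)+1 = 1 from rfl, hY1, hcc0] at l2
        rw [hcc0, abs_le]
        constructor <;> linarith
      · rcases Nat.even_or_odd i with ⟨j, hj⟩ | ⟨j, hj⟩
        · have hij : i = 2*j := by omega
          have hj1 : 1 ≤ j := by omega
          have hjN : j ≤ N := by omega
          refine ⟨j, hjN, ?_⟩
          rw [hij, hYeven j hj1 hjN] at l1
          rcases Nat.lt_or_ge j N with hlt | hge'
          · rw [hij, show (2*j)+1 = 2*j+1 from rfl, hYodd j hlt] at l2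
            rw [abs_le]
            constructor <;> linarith
          · have hjN' : j = N := by omega
            rw [hij] at l2
            rw [hjN'] at l1 l2 ⊢
            rw [hYlast] at l2
            rw [hccN N le_rfl] at l1 ⊢
            rw [abs_le]
            constructor <;> linarith
        · exfalso
          have hij : i = 2*j+1 := by omega
          have hjN : j < N := by omega
          rw [hij, hXodd j hjN] at h1
          have h3 : 2*j+1+1 = 2*(j+1) := by omega
          rw [hij, h3, hXeven (j+1) (by omega) (by omega)] at h2
          have h4 : (j+1) - 1 = j := by omega
          rw [h4] at h2
          have hempty := (hcb j hjN).2.2.2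
          rw [Set.eq_empty_iff_forall_notMem] at hempty
          exact hempty w ⟨⟨h1, h2⟩, hw⟩
    obtain ⟨j1, hj1, d1⟩ := hcov a ha
    obtain ⟨j2, hj2, d2⟩ := hcov b hb
    obtain ⟨j3, hj3, d3⟩ := hcov c' hc'
    have hmem : ∀ j, j ≤ N → cc j ∈ CF := fun j hj =>
      Finset.mem_image.mpr ⟨j, Finset.mem_range.mpr (by omega), rfl⟩
    rw [abs_le] at d1 d2 d3
    by_cases hc12 : cc j1 = cc j2
    · have hb2 : F b - F a ≤ 2*ρ := by
        rw [hc12] at d1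
        linarith [d1.1, d1.2, d2.1, d2.2]
      linarith [hρδ]
    · have hT := hm0le (cc j1) (hmem j1 hj1) (cc j2) (hmem j2 hj2) (cc j3) (hmem j3 hj3)
        (fun h => hc12 h.1)
      have habs : |cc j1 + cc j3 - 2*cc j2| ≤ 4*ρ := by
        rw [abs_le]
        constructor <;> nlinarith [d1.1, d1.2, d2.1, d2.2, d3.1, d3.2]
      linarith [hρm0, hm0pos]

private lemma meagre_decomp (S : Set ℝ) (h : IsMeagre S) :
    ∃ F : ℕ → Set ℝ, (∀ n, IsClosed (F n)) ∧ (∀ n, IsNowhereDense (F n)) ∧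
      (∀ n m, n ≤ m → F n ⊆ F m) ∧ S ⊆ ⋃ n, F n := by
  rw [isMeagre_iff_countable_union_isNowhereDense] at h
  obtain ⟨𝒮, hnwd, hcnt, hcov⟩ := h
  have hins : (insert (∅ : Set ℝ) 𝒮).Countable := hcnt.insert _
  obtain ⟨g, hg⟩ := hins.exists_eq_range (Set.insert_nonempty _ _)
  have hg_nwd : ∀ i, IsNowhereDense (g i) := by
    intro i
    have hgi : g i ∈ insert (∅ : Set ℝ) 𝒮 := by rw [hg]; exact ⟨i, rfl⟩
    rcases hgi with h | h
    · rw [h]; exact isNowhereDense_empty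
    · exact hnwd _ h
  set F : ℕ → Set ℝ := fun n => Nat.rec (closure (g 0)) (fun n Fn => Fn ∪ closure (g (n+1))) n
    with hF_def
  have hFsucc : ∀ n, F (n+1) = F n ∪ closure (g (n+1)) := fun n => rfl
  have hF0 : F 0 = closure (g 0) := rfl
  have hclosed : ∀ n, IsClosed (F n) := by
    intro n
    induction n with
    | zero => rw [hF0]; exact isClosed_closure
    | succ n ih => rw [hFsucc]; exact ih.union isClosed_closure
  have hnwdF : ∀ n, IsNowhereDense (F n) := by
    intro n
    induction n with
    | zero => rw [hF0]; exact (hg_nwd 0).closure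
    | succ n ih =>
      rw [hFsucc]
      exact nwd_union (hclosed n) isClosed_closure ih (hg_nwd (n+1)).closure
  have hsub : ∀ i, closure (g i) ⊆ F i := by
    intro i
    cases i with
    | zero => rw [hF0]
    | succ i => rw [hFsucc]; exact Set.subset_union_right
  have hmono : ∀ n m, n ≤ m → F n ⊆ F m := by
    intro n m hnm
    induction m with
    | zero => have : n = 0 := by omega
              subst this; exact subset_rfl
    | succ m ih =>
      rcases Nat.lt_or_ge n (m+1) with h | h
      · refine (ih (by omega)).trans ?_
        rw [hFsucc]
        exact Set.subset_union_left
      · have : n = m+1 := by omega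
        subst this; exact subset_rfl
  refine ⟨F, hclosed, hnwdF, hmono, ?_⟩
  intro x hx
  obtain ⟨t, ht, hxt⟩ := hcov hx
  have : t ∈ insert (∅ : Set ℝ) 𝒮 := Set.mem_insert_of_mem _ ht
  rw [hg] at this
  obtain ⟨i, rfl⟩ := this
  exact Set.mem_iUnion.mpr ⟨i, hsub i (subset_closure hxt)⟩

private abbrev II : Type := Set.Icc (0:ℝ) 1

private def HSp : Set (C(II, II) × C(II, II)) :=
  {p | p.2.comp p.1 = ContinuousMap.id II ∧ p.1.comp p.2 = ContinuousMap.id II}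

private lemma HSp_closed : IsClosed HSp := by
  have h1 : Continuous fun p : C(II, II) × C(II, II) => p.2.comp p.1 :=
    ContinuousMap.continuous_comp'
  have h2 : Continuous fun p : C(II, II) × C(II, II) => p.1.comp p.2 := by
    have := (ContinuousMap.continuous_comp' (X := II) (Y := II) (Z := II)).comp
      (continuous_swap : Continuous (Prod.swap : C(II,II) × C(II,II) → C(II,II) × C(II,II)))
    exact this
  exact (isClosed_eq h1 continuous_const).inter (isClosed_eq h2 continuous_const)

private def BadSet (F : Set ℝ) (k : ℕ) : Set ↥HSp :=
  {q | ∃ s t r : II, (s:ℝ) ∈ F ∧ (t:ℝ) ∈ F ∧ (r:ℝ) ∈ F ∧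
    ((q.val.1 s : ℝ) + (q.val.1 r : ℝ) = 2 * (q.val.1 t : ℝ)) ∧
    1/((k:ℝ)+1) ≤ (q.val.1 t : ℝ) - (q.val.1 s : ℝ)}

private lemma BadSet_closed (F : Set ℝ) (hF : IsClosed F) (k : ℕ) : IsClosed (BadSet F k) := by
  classical
  set E : Set ((II × II × II) × ↥HSp) :=
    {z | (z.1.1 : ℝ) ∈ F ∧ (z.1.2.1 : ℝ) ∈ F ∧ (z.1.2.2 : ℝ) ∈ F ∧
      ((z.2.val.1 z.1.1 : ℝ) + (z.2.val.1 z.1.2.2 : ℝ) = 2 * (z.2.val.1 z.1.2.1 : ℝ)) ∧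
      1/((k:ℝ)+1) ≤ (z.2.val.1 z.1.2.1 : ℝ) - (z.2.val.1 z.1.1 : ℝ)} with hE_def
  have hmap : Continuous fun z : (II × II × II) × ↥HSp => z.2.val.1 :=
    continuous_fst.comp (continuous_subtype_val.comp continuous_snd)
  have hev : ∀ (w : (II × II × II) × ↥HSp → II),
      Continuous w → Continuous fun z : (II × II × II) × ↥HSp => (z.2.val.1 (w z) : ℝ) := by
    intro w hw
    apply continuous_subtype_val.comp
    exact continuous_eval.comp (hmap.prodMk hw)
  have hA := hev (fun z => z.1.1) (continuous_fst.comp continuous_fst)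
  have hB := hev (fun z => z.1.2.1) (continuous_fst.comp (continuous_snd.comp continuous_fst))
  have hC := hev (fun z => z.1.2.2) (continuous_snd.comp (continuous_snd.comp continuous_fst))
  have hEclosed : IsClosed E := by
    rw [hE_def]
    simp only [Set.setOf_and]
    refine IsClosed.inter ?_ (IsClosed.inter ?_ (IsClosed.inter ?_ (IsClosed.inter ?_ ?_)))
    · exact hF.preimage (continuous_subtype_val.comp (continuous_fst.comp continuous_fst))
    · exact hF.preimage
        (continuous_subtype_val.comp (continuous_fst.comp (continuous_snd.comp continuous_fst)))
    · exact hF.preimage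
        (continuous_subtype_val.comp (continuous_snd.comp (continuous_snd.comp continuous_fst)))
    · exact isClosed_eq (hA.add hC) (continuous_const.mul hB)
    · exact isClosed_le continuous_const (hB.sub hA)
  have himg : BadSet F k = Prod.snd '' E := by
    ext q
    constructor
    · rintro ⟨s, t, r, h1, h2, h3, h4, h5⟩
      exact ⟨((s, t, r), q), ⟨h1, h2, h3, h4, h5⟩, rfl⟩
    · rintro ⟨⟨⟨s, t, r⟩, q'⟩, ⟨h1, h2, h3, h4, h5⟩, rfl⟩
      exact ⟨s, t, r, h1, h2, h3, h4, h5⟩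
  rw [himg]
  exact isClosedMap_snd_of_compactSpace E hEclosed

set_option maxHeartbeats 2000000 in
private lemma BadSet_compl_dense (F : Set ℝ) (hFc : IsClosed F) (hFnwd : IsNowhereDense F)
    (k : ℕ) : Dense (BadSet F k)ᶜ := by
  rw [Metric.dense_iff]
  intro q r hr
  set f : C(II, II) := q.val.1 with hf_def
  set g : C(II, II) := q.val.2 with hg_def
  have hgf : ∀ x : II, g (f x) = x := by
    intro x
    have h := q.2.1
    calc g (f x) = (g.comp f) x := rfl
    _ = ContinuousMap.id II x := by rw [hg_def, hf_def, h]
    _ = x := rfl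
  have hfg : ∀ x : II, f (g x) = x := by
    intro x
    have h := q.2.2
    calc f (g x) = (f.comp g) x := rfl
    _ = ContinuousMap.id II x := by rw [hg_def, hf_def, h]
    _ = x := rfl
  have hgu := CompactSpace.uniformContinuous_of_continuous g.continuous
  rw [Metric.uniformContinuous_iff] at hgu
  obtain ⟨ε', hε'pos, hε'⟩ := hgu (r/2) (by linarith)
  set K : Set ℝ := (fun x : II => (f x : ℝ)) '' (Subtype.val ⁻¹' F) with hK_def
  have hKsub : K ⊆ Icc 0 1 := by
    rintro w ⟨x, hx, rfl⟩
    exact (f x).2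
  have hKfree : ∀ a b : ℝ, 0 ≤ a → b ≤ 1 → a < b →
      ∃ a' b' : ℝ, a < a' ∧ a' < b' ∧ b' < b ∧ Icc a' b' ∩ K = ∅ := by
    intro a b ha hb hab
    have hw : (a+b)/2 ∈ Set.Icc (0:ℝ) 1 := ⟨by linarith, by linarith⟩
    set x0 : II := g ⟨(a+b)/2, hw⟩ with hx0_def
    set V : Set II := (fun x : II => (f x : ℝ)) ⁻¹' (Ioo a b) with hV_def
    have hVopen : IsOpen V :=
      (continuous_subtype_val.comp f.continuous).isOpen_preimage _ isOpen_Ioo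
    have hx0V : x0 ∈ V := by
      show (f x0 : ℝ) ∈ Ioo a b
      rw [hx0_def, hfg]
      exact ⟨by linarith, by linarith⟩
    obtain ⟨O, hOopen, hOeq⟩ := isOpen_induced_iff.mp hVopen
    have hx0O : (x0 : ℝ) ∈ O := by
      rw [← hOeq] at hx0V
      exact hx0V
    obtain ⟨θ, hθpos, hball⟩ := Metric.isOpen_iff.mp hOopen _ hx0O
    have hIooO : Ioo ((x0:ℝ) - θ) ((x0:ℝ) + θ) ⊆ O := by
      rw [← Real.ball_eq_Ioo]; exact hball
    set l : ℝ := max ((x0:ℝ) - θ) 0 with hl_def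
    set rr : ℝ := min ((x0:ℝ) + θ) 1 with hrr_def
    have hx0mem := x0.2
    have hlrr : l < rr := by
      apply max_lt
      · exact lt_min (by linarith) (by linarith [hx0mem.2])
      · exact lt_min (by linarith [hx0mem.1]) (by norm_num)
    have hsubO : Ioo l rr ⊆ O := fun y hy =>
      hIooO ⟨lt_of_le_of_lt (le_max_left _ _) hy.1, lt_of_lt_of_le hy.2 (min_le_left _ _)⟩
    have hsubI : Ioo l rr ⊆ Set.Icc (0:ℝ) 1 := fun y hy =>
      ⟨le_trans (le_max_right _ _) (le_of_lt hy.1), le_trans (le_of_lt hy.2) (min_le_right _ _)⟩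
    have hexy : ∃ y ∈ Ioo l rr, y ∉ F := by
      by_contra hcon
      push_neg at hcon
      have hint := (hFc.isNowhereDense_iff).mp hFnwd
      have hmm : (l+rr)/2 ∈ interior F :=
        interior_maximal hcon isOpen_Ioo ⟨by linarith, by linarith⟩
      rw [hint] at hmm
      exact hmm
    obtain ⟨y, hyIoo, hyF⟩ := hexy
    have hopen2 : IsOpen (Fᶜ ∩ Ioo l rr) := hFc.isOpen_compl.inter isOpen_Ioo
    obtain ⟨θ₂, hθ₂pos, hb2⟩ := Metric.isOpen_iff.mp hopen2 y ⟨hyF, hyIoo⟩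
    set θ₃ : ℝ := θ₂/2 with hθ₃_def
    have hθ₃pos : 0 < θ₃ := by rw [hθ₃_def]; linarith
    have hIcc2 : Icc (y - θ₃) (y + θ₃) ⊆ Fᶜ ∩ Ioo l rr := by
      intro w hw
      apply hb2
      rw [Metric.mem_ball, Real.dist_eq, abs_lt]
      constructor
      · linarith [hw.1]
      · linarith [hw.2]
    have hImem : ∀ t ∈ Icc (y - θ₃) (y + θ₃), t ∈ Set.Icc (0:ℝ) 1 :=
      fun t ht => hsubI (hIcc2 ht).2
    set π : ℝ → II := fun t => Set.projIcc (0:ℝ) 1 (by norm_num) t with hπ_def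
    have hπval : ∀ t, t ∈ Icc (y - θ₃) (y + θ₃) → (π t : ℝ) = t := by
      intro t ht
      rw [hπ_def]
      exact congrArg Subtype.val (Set.projIcc_of_mem _ (hImem t ht))
    set h2 : ℝ → ℝ := fun t => (f (π t) : ℝ) with hh2_def
    have hcont2 : ContinuousOn h2 (Icc (y - θ₃) (y + θ₃)) :=
      (continuous_subtype_val.comp (f.continuous.comp continuous_projIcc)).continuousOn
    have hinj : ∀ t1 t2, t1 ∈ Icc (y-θ₃) (y+θ₃) → t2 ∈ Icc (y-θ₃) (y+θ₃) →
        h2 t1 = h2 t2 → t1 = t2 := by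
      intro t1 t2 h1 h2' heq
      have he1 : f (π t1) = f (π t2) := Subtype.coe_injective heq
      have he2 := congrArg g he1
      rw [hgf, hgf] at he2
      have he3 := congrArg Subtype.val he2
      rwa [hπval t1 h1, hπval t2 h2'] at he3
    have hval : ∀ t ∈ Icc (y-θ₃) (y+θ₃), h2 t ∈ Ioo a b ∧ h2 t ∉ K := by
      intro t ht
      constructor
      · have hmem : π t ∈ V := by
          rw [← hOeq]
          show (π t : ℝ) ∈ O
          rw [hπval t ht]
          exact hsubO (hIcc2 ht).2
        exact hmem
      · rintro ⟨x, hxF, hx⟩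
        have he1 : f x = f (π t) := Subtype.coe_injective hx
        have he2 := congrArg g he1
        rw [hgf, hgf] at he2
        have hxval : (x:ℝ) = t := by rw [he2, hπval t ht]
        have hxF' : (x:ℝ) ∈ F := hxF
        rw [hxval] at hxF'
        exact (hIcc2 ht).1 hxF'
    have hmem1 : (y - θ₃) ∈ Icc (y-θ₃) (y+θ₃) := ⟨le_refl _, by linarith⟩
    have hmem2 : (y + θ₃) ∈ Icc (y-θ₃) (y+θ₃) := ⟨by linarith, le_refl _⟩
    have hne : h2 (y - θ₃) ≠ h2 (y + θ₃) := by
      intro he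
      have := hinj _ _ hmem1 hmem2 he
      linarith
    rcases le_total (h2 (y - θ₃)) (h2 (y + θ₃)) with hle | hle
    · refine ⟨h2 (y - θ₃), h2 (y + θ₃), (hval _ hmem1).1.1, lt_of_le_of_ne hle hne,
        (hval _ hmem2).1.2, ?_⟩
      rw [Set.eq_empty_iff_forall_notMem]
      rintro w ⟨hw1, hw2⟩
      obtain ⟨t, ht, rfl⟩ := intermediate_value_Icc (by linarith : y - θ₃ ≤ y + θ₃) hcont2 hw1
      exact (hval t ht).2 hw2
    · refine ⟨h2 (y + θ₃), h2 (y - θ₃), (hval _ hmem2).1.1,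
        lt_of_le_of_ne hle (Ne.symm hne), (hval _ hmem1).1.2, ?_⟩
      rw [Set.eq_empty_iff_forall_notMem]
      rintro w ⟨hw1, hw2⟩
      obtain ⟨t, ht, rfl⟩ := intermediate_value_Icc' (by linarith : y - θ₃ ≤ y + θ₃) hcont2 hw1
      exact (hval t ht).2 hw2
  -- apply the perturbation lemma
  set ε0 : ℝ := min (r/2) (ε'/2) with hε0_def
  have hε0pos : 0 < ε0 := lt_min (by linarith) (by linarith)
  have hδpos : 0 < 1/((k:ℝ)+1) := by positivity
  obtain ⟨Fm, hFmono, hFsurj, hFm0, hFm1, hFclose, hFnoAP⟩ :=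
    perturb K hKsub hKfree ε0 (1/((k:ℝ)+1)) hε0pos hδpos
  set e := StrictMono.orderIsoOfSurjective Fm hFmono hFsurj with he_def
  have hecoe : ⇑e = Fm := StrictMono.coe_orderIsoOfSurjective Fm hFmono hFsurj
  have hFmem : ∀ x : II, Fm (x:ℝ) ∈ Set.Icc (0:ℝ) 1 := by
    intro x
    constructor
    · simpa [hFm0] using hFmono.monotone x.2.1
    · simpa [hFm1] using hFmono.monotone x.2.2
  have he0 : e 0 = 0 := by
    have h := congrFun hecoe 0
    rw [h, hFm0]
  have he1 : e 1 = 1 := by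
    have h := congrFun hecoe 1
    rw [h, hFm1]
  have hsymm0 : e.symm 0 = 0 := by rw [OrderIso.symm_apply_eq, he0]
  have hsymm1 : e.symm 1 = 1 := by rw [OrderIso.symm_apply_eq, he1]
  have hGmem : ∀ x : II, e.symm (x:ℝ) ∈ Set.Icc (0:ℝ) 1 := by
    intro x
    constructor
    · simpa [hsymm0] using e.symm.monotone x.2.1
    · simpa [hsymm1] using e.symm.monotone x.2.2
  set γ : C(II,II) := ⟨fun x => ⟨Fm x, hFmem x⟩, by
      apply Continuous.subtype_mk
      exact (hecoe ▸ e.continuous).comp continuous_subtype_val⟩ with hγ_def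
  set γ' : C(II,II) := ⟨fun x => ⟨e.symm x, hGmem x⟩, by
      apply Continuous.subtype_mk
      exact e.symm.continuous.comp continuous_subtype_val⟩ with hγ'_def
  have hγγ' : ∀ x : II, γ' (γ x) = x := by
    intro x
    apply Subtype.ext
    show e.symm (Fm (x:ℝ)) = (x:ℝ)
    rw [← hecoe]
    exact e.symm_apply_apply _
  have hγ'γ : ∀ x : II, γ (γ' x) = x := by
    intro x
    apply Subtype.ext
    show Fm (e.symm (x:ℝ)) = (x:ℝ)
    rw [← hecoe]
    exact e.apply_symm_apply _
  set q' : ↥HSp := ⟨(γ.comp f, g.comp γ'), by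
      constructor
      · ext x
        show ((g (γ' (γ (f x)))) : ℝ) = (x : ℝ)
        rw [hγγ', hgf]
      · ext x
        show ((γ (f (g (γ' x)))) : ℝ) = (x : ℝ)
        rw [hfg, hγ'γ]⟩ with hq'_def
  refine ⟨q', ?_, ?_⟩
  · -- q' is close to q
    rw [Metric.mem_ball, Subtype.dist_eq, Prod.dist_eq]
    have hd1 : dist (γ.comp f) f ≤ r/2 := by
      rw [ContinuousMap.dist_le (by linarith)]
      intro x
      rw [Subtype.dist_eq, Real.dist_eq]
      show |Fm ((f x : ℝ)) - (f x : ℝ)| ≤ r/2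
      exact le_trans (hFclose _ (f x).2) (le_trans (min_le_left _ _) (le_refl _))
    have hd2 : dist (g.comp γ') g ≤ r/2 := by
      rw [ContinuousMap.dist_le (by linarith)]
      intro x
      have hdist : dist (γ' x) x < ε' := by
        rw [Subtype.dist_eq, Real.dist_eq]
        show |e.symm (x:ℝ) - (x:ℝ)| < ε'
        have hz := hGmem x
        have hzv : Fm (e.symm (x:ℝ)) = (x:ℝ) := by
          rw [← hecoe]; exact e.apply_symm_apply _
        have := hFclose (e.symm (x:ℝ)) hz
        rw [hzv] at this
        have h1 : |e.symm (x:ℝ) - (x:ℝ)| = |(x:ℝ) - e.symm (x:ℝ)| := abs_sub_comm _ _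
        rw [h1]
        calc |(x:ℝ) - e.symm (x:ℝ)| ≤ ε0 := this
        _ ≤ ε'/2 := min_le_right _ _
        _ < ε' := by linarith
      exact le_of_lt (hε' hdist)
    have : max (dist (γ.comp f) f) (dist (g.comp γ') g) < r := by
      apply max_lt <;> linarith
    calc dist (q'.val) (q.val) = max (dist (γ.comp f) f) (dist (g.comp γ') g) := by
          rw [hq'_def]
          rfl
      _ < r := this
  · -- q' is not bad
    rintro ⟨s, t, rr', h1, h2, h3, heq, hge⟩
    have hK1 : ∀ x : II, (x:ℝ) ∈ F → ((f x : ℝ)) ∈ K := fun x hx => ⟨x, hx, rfl⟩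
    refine hFnoAP _ (hK1 s h1) _ (hK1 t h2) _ (hK1 rr' h3) ?_ ?_
    · exact heq
    · exact hge


/-- If `S ⊆ [0,1]` is meager then some homeomorphism of `[0,1]` maps `S` onto an AP-free set. -/
theorem meager_exists_homeomorph_FAP (S : Set ℝ) (hS : S ⊆ Set.Icc 0 1)
    (hmeager : IsMeagre S) :
    ∃ φ : Set.Icc (0:ℝ) 1 ≃ₜ Set.Icc (0:ℝ) 1, FAP (imgH φ S) := by
  classical
  obtain ⟨Fam, hclosed, hnwd, hmono, hcover⟩ := meagre_decomp S hmeager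
  haveI : CompleteSpace ↥HSp := HSp_closed.completeSpace_coe
  haveI : Nonempty ↥HSp := ⟨⟨(ContinuousMap.id II, ContinuousMap.id II), by
    constructor <;> ext x <;> rfl⟩⟩
  have hbadmeagre : ∀ m : ℕ, IsMeagre (BadSet (Fam (Nat.unpair m).1) (Nat.unpair m).2) := by
    intro m
    set n := (Nat.unpair m).1
    set k := (Nat.unpair m).2
    have hcl := BadSet_closed (Fam n) (hclosed n) k
    have hnw : IsNowhereDense (BadSet (Fam n) k) := by
      rw [hcl.isNowhereDense_iff, interior_eq_empty_iff_dense_compl]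
      exact BadSet_compl_dense (Fam n) (hclosed n) (hnwd n) k
    rw [isMeagre_iff_countable_union_isNowhereDense]
    exact ⟨{BadSet (Fam n) k}, by simpa using hnw, Set.countable_singleton _, by simp⟩
  have hU : IsMeagre (⋃ m : ℕ, BadSet (Fam (Nat.unpair m).1) (Nat.unpair m).2) :=
    isMeagre_iUnion hbadmeagre
  have hdense : Dense (⋃ m : ℕ, BadSet (Fam (Nat.unpair m).1) (Nat.unpair m).2)ᶜ :=
    dense_of_mem_residual hU
  obtain ⟨q, hq⟩ := hdense.nonempty
  have hqgood : ∀ n k : ℕ, q ∉ BadSet (Fam n) k := by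
    intro n k hbad
    apply hq
    refine Set.mem_iUnion.mpr ⟨Nat.pair n k, ?_⟩
    rwa [Nat.unpair_pair]
  set f : C(II,II) := q.val.1 with hf_def
  set g : C(II,II) := q.val.2 with hg_def
  have hgf : ∀ x : II, g (f x) = x := by
    intro x
    have h := q.2.1
    calc g (f x) = (g.comp f) x := rfl
    _ = ContinuousMap.id II x := by rw [hg_def, hf_def, h]
    _ = x := rfl
  have hfg : ∀ x : II, f (g x) = x := by
    intro x
    have h := q.2.2
    calc f (g x) = (f.comp g) x := rfl
    _ = ContinuousMap.id II x := by rw [hg_def, hf_def, h]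
    _ = x := rfl
  refine ⟨⟨⟨⇑f, ⇑g, hgf, hfg⟩, f.continuous, g.continuous⟩, ?_⟩
  rintro ⟨x, d, hd, hx1, hx2, hx3⟩
  obtain ⟨w1, ⟨s1, hs1, rfl⟩, he1⟩ := hx1
  obtain ⟨w2, ⟨s2, hs2, rfl⟩, he2⟩ := hx2
  obtain ⟨w3, ⟨s3, hs3, rfl⟩, he3⟩ := hx3
  obtain ⟨n1, hn1⟩ := Set.mem_iUnion.mp (hcover hs1)
  obtain ⟨n2, hn2⟩ := Set.mem_iUnion.mp (hcover hs2)
  obtain ⟨n3, hn3⟩ := Set.mem_iUnion.mp (hcover hs3)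
  set n := max n1 (max n2 n3) with hn_def
  obtain ⟨k, hk⟩ := exists_nat_one_div_lt hd
  apply hqgood n k
  refine ⟨s1, s2, s3, hmono n1 n (le_max_left _ _) hn1,
    hmono n2 n (le_trans (le_max_left _ _) (le_max_right _ _)) hn2,
    hmono n3 n (le_trans (le_max_right _ _) (le_max_right _ _)) hn3, ?_, ?_⟩
  · have e1 : ((f s1 : II) : ℝ) = x := he1
    have e2 : ((f s2 : II) : ℝ) = x + d := he2
    have e3 : ((f s3 : II) : ℝ) = x + 2*d := he3
    rw [e1, e2, e3]
    ring
  · have e1 : ((f s1 : II) : ℝ) = x := he1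
    have e2 : ((f s2 : II) : ℝ) = x + d := he2
    rw [e1, e2]
    push_cast at hk ⊢
    linarith
end
end

section
/- Let S ⊆ [0,1] be a Borel set that is not meager. Then for every homeomorphism φ : [0,1] → [0,1], the image φ(S) is RAP. -/
open Set

noncomputable section

/-- The image under the inclusion of a nowhere dense subset of `[0,1]` is nowhere dense in `ℝ`. -/
lemma aux_nd_image {t : Set (Set.Icc (0:ℝ) 1)} (ht : IsNowhereDense t) :
    IsNowhereDense (Subtype.val '' t) := by
  have hce : Topology.IsClosedEmbedding (Subtype.val : Set.Icc (0:ℝ) 1 → ℝ) :=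
    isClosed_Icc.isClosedEmbedding_subtypeVal
  rw [IsNowhereDense] at ht ⊢
  rw [hce.closure_image_eq]
  by_contra h
  obtain ⟨x, hx⟩ := nonempty_iff_ne_empty.mpr h
  set V : Set (Set.Icc (0:ℝ) 1) := Subtype.val ⁻¹' interior (Subtype.val '' closure t) with hV
  have hsub : V ⊆ closure t := by
    intro z hz
    obtain ⟨w, hw, hwz⟩ := interior_subset hz
    rwa [← Subtype.coe_injective hwz]
  have hopen : IsOpen V :=
    isOpen_interior.preimage continuous_subtype_val
  obtain ⟨y, hyt, rfl⟩ := interior_subset hx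
  have hy : y ∈ interior (closure t) := interior_maximal hsub hopen hx
  rw [ht] at hy
  exact hy

/-- The image under the inclusion of a meagre subset of `[0,1]` is meagre in `ℝ`. -/
lemma aux_meagre_image {t : Set (Set.Icc (0:ℝ) 1)} (ht : IsMeagre t) :
    IsMeagre (Subtype.val '' t) := by
  rw [isMeagre_iff_countable_union_isNowhereDense] at ht ⊢
  obtain ⟨Sc, hnd, hc, hsub⟩ := ht
  refine ⟨(fun u => Subtype.val '' u) '' Sc, ?_, hc.image _, ?_⟩
  · rintro _ ⟨u, hu, rfl⟩; exact aux_nd_image (hnd u hu)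
  · rintro _ ⟨y, hy, rfl⟩
    obtain ⟨u, hu, hyu⟩ := hsub hy
    exact ⟨Subtype.val '' u, ⟨u, hu, rfl⟩, mem_image_of_mem _ hyu⟩

/-- If a set contains an interval minus a meagre set, it is rich in APs. -/
lemma aux_RAP {A : Set ℝ} {a b : ℝ} (hab : a < b) {M : Set ℝ} (hM : IsMeagre M)
    (hsub : Set.Ioo a b \ M ⊆ A) : RAP A := by
  intro n hn
  have hn0 : 0 < (n : ℝ) := by
    have : (3:ℝ) ≤ (n:ℝ) := by exact_mod_cast hn
    linarith
  set d := (b - a) / n with hd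
  have hd0 : 0 < d := div_pos (by linarith) hn0
  have hMc : Mᶜ ∈ residual ℝ := hM
  have hres : ∀ k : Fin n, (fun x : ℝ => x + (k : ℝ) * d) ⁻¹' Mᶜ ∈ residual ℝ := fun k =>
    tendsto_residual_of_isOpenMap (by continuity)
      ((Homeomorph.addRight ((k : ℝ) * d)).isOpenMap) hMc
  have hR : (⋂ k : Fin n, (fun x : ℝ => x + (k : ℝ) * d) ⁻¹' Mᶜ) ∈ residual ℝ :=
    (countable_iInter_mem).mpr hres
  obtain ⟨x, hxR, hxI⟩ := (dense_of_mem_residual hR).exists_mem_open isOpen_Ioo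
      (nonempty_Ioo.mpr (by linarith : a < a + d))
  refine ⟨x, d, hd0, fun k hk => ?_⟩
  have hxM : x + (k : ℝ) * d ∉ M := by
    have := mem_iInter.mp hxR ⟨k, hk⟩
    simpa using this
  apply hsub
  have hk1 : (k : ℝ) ≤ (n : ℝ) - 1 := by
    have : (k : ℝ) + 1 ≤ (n : ℝ) := by exact_mod_cast hk
    linarith
  have hnd : (n : ℝ) * d = b - a := by
    rw [hd]; field_simp
  have hkd0 : 0 ≤ (k : ℝ) * d := mul_nonneg (Nat.cast_nonneg k) hd0.le
  have hkdle : (k : ℝ) * d ≤ ((n : ℝ) - 1) * d := mul_le_mul_of_nonneg_right hk1 hd0.le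
  refine ⟨⟨?_, ?_⟩, hxM⟩
  · have := hxI.1; linarith
  · have := hxI.2; nlinarith

/-- If `S ⊆ [0,1]` is Borel and not meager, then every homeomorphism of `[0,1]`
maps `S` onto a set rich in APs. -/
theorem nonmeager_borel_all_homeomorph_RAP (S : Set ℝ) (hS : S ⊆ Set.Icc 0 1)
    (hBorel : MeasurableSet S) (hmeager : ¬ IsMeagre S) :
    ∀ φ : Set.Icc (0:ℝ) 1 ≃ₜ Set.Icc (0:ℝ) 1, RAP (imgH φ S) := by
  intro φ
  set S' : Set (Set.Icc (0:ℝ) 1) := Subtype.val ⁻¹' S with hS'def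
  have hS'm : MeasurableSet S' := hBorel.preimage measurable_subtype_coe
  have himg : Subtype.val '' S' = S := by
    apply Subset.antisymm
    · rintro _ ⟨y, hy, rfl⟩; exact hy
    · intro x hx; exact ⟨⟨x, hS hx⟩, hx, rfl⟩
  have hS'nm : ¬ IsMeagre S' := by
    intro h
    apply hmeager
    have := aux_meagre_image h
    rwa [himg] at this
  set T : Set (Set.Icc (0:ℝ) 1) := ⇑φ '' S' with hTdef
  have hTpre : T = ⇑φ.symm ⁻¹' S' := by
    rw [hTdef]
    exact φ.toEquiv.image_eq_preimage_symm S'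
  have hTm : MeasurableSet T := by
    rw [hTpre]; exact hS'm.preimage (φ.symm.continuous.measurable)
  have hTnm : ¬ IsMeagre T := by
    intro h
    apply hS'nm
    have hpre : S' = ⇑φ ⁻¹' T := by
      rw [hTdef, preimage_image_eq _ φ.injective]
    rw [hpre]
    exact h.preimage_of_isOpenMap φ.continuous φ.isOpenMap
  obtain ⟨U, hUo, hUe⟩ := hTm.baireMeasurableSet.residualEq_isOpen
  have hE : {x | x ∈ T ↔ x ∈ U} ∈ residual _ := by
    filter_upwards [hUe] with x hx
    exact iff_of_eq hx
  have hUT : IsMeagre (U \ T) := by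
    rw [IsMeagre]
    refine Filter.mem_of_superset hE ?_
    intro x hx hxd
    exact hxd.2 (hx.mpr hxd.1)
  have hTU : IsMeagre (T \ U) := by
    rw [IsMeagre]
    refine Filter.mem_of_superset hE ?_
    intro x hx hxd
    exact hxd.2 (hx.mp hxd.1)
  have hUne : U.Nonempty := by
    rcases U.eq_empty_or_nonempty with h | h
    · exfalso
      apply hTnm
      refine hTU.mono ?_
      rw [h]
      simp
    · exact h
  obtain ⟨u, hu⟩ := hUne
  obtain ⟨O, hOo, hOU⟩ := isOpen_induced_iff.mp hUo
  have huO : (u : ℝ) ∈ O := by rw [← hOU] at hu; exact hu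
  obtain ⟨ε, hε, hball⟩ := Metric.isOpen_iff.mp hOo u.1 huO
  -- find an interval inside `Subtype.val '' U`
  have hu0 : (0:ℝ) ≤ u.1 := u.2.1
  have hu1 : u.1 ≤ 1 := u.2.2
  have hint : ∃ a b : ℝ, a < b ∧ Set.Ioo a b ⊆ Subtype.val '' U := by
    by_cases hc : u.1 < 1
    · refine ⟨u.1, min (u.1 + ε) 1, lt_min (by linarith) hc, ?_⟩
      intro x hx
      have hx1 : u.1 < x := hx.1
      have hx2 : x < u.1 + ε := lt_of_lt_of_le hx.2 (min_le_left _ _)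
      have hx3 : x < 1 := lt_of_lt_of_le hx.2 (min_le_right _ _)
      have hxI : x ∈ Set.Icc (0:ℝ) 1 := ⟨by linarith, hx3.le⟩
      have hxO : x ∈ O := hball (by rw [Metric.mem_ball, Real.dist_eq, abs_lt]; constructor <;> linarith)
      refine ⟨⟨x, hxI⟩, ?_, rfl⟩
      rw [← hOU]; exact hxO
    · push_neg at hc
      have hc1 : u.1 = 1 := le_antisymm hu1 hc
      refine ⟨max (1 - ε) 0, 1, max_lt (by linarith) one_pos, ?_⟩
      intro x hx
      have hx1 : 1 - ε < x := lt_of_le_of_lt (le_max_left _ _) hx.1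
      have hx0 : 0 < x := lt_of_le_of_lt (le_max_right _ _) hx.1
      have hxI : x ∈ Set.Icc (0:ℝ) 1 := ⟨hx0.le, hx.2.le⟩
      have hxO : x ∈ O := by
        apply hball
        rw [Metric.mem_ball, Real.dist_eq, hc1, abs_lt]
        constructor <;> linarith [hx.2, hε]
      refine ⟨⟨x, hxI⟩, ?_, rfl⟩
      rw [← hOU]; exact hxO
  obtain ⟨a, b, hab, hIoo⟩ := hint
  have hMme : IsMeagre (Subtype.val '' (U \ T)) := aux_meagre_image hUT
  refine aux_RAP hab hMme ?_
  rintro x ⟨hx1, hx2⟩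
  obtain ⟨y, hyU, rfl⟩ := hIoo hx1
  have hyT : y ∈ T := by
    by_contra hyT
    exact hx2 ⟨y, ⟨hyU, hyT⟩, rfl⟩
  exact ⟨y, hyT, rfl⟩
end
end

section
/- Let S ⊆ ℝ be residual in some interval X ⊆ ℝ of positive length, i.e., X \ S is meager and X is an interval with more than one point. Then S is RAP: for every integer n ≥ 3, S contains an n-term arithmetic progression. -/
open Set

noncomputable section

/-- A set residual in some interval of positive length is rich in APs. -/
theorem residual_in_interval_RAP (S X : Set ℝ) (hX : X.OrdConnected) (hXnt : X.Nontrivial)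
    (hres : IsMeagre (X \ S)) : RAP S := by
  intro n hn
  obtain ⟨a, ha, b, hb, hab⟩ := hXnt.exists_lt
  have hn0 : (0:ℝ) < n := by positivity
  set d : ℝ := (b - a) / n with hd
  have hd0 : 0 < d := div_pos (by linarith) hn0
  have hmk : ∀ k : ℕ, IsMeagre ((fun x : ℝ => x + k * d) ⁻¹' (X \ S)) := fun k =>
    hres.preimage_of_isOpenMap (by continuity) (isOpenMap_add_right _)
  have hM : IsMeagre (⋃ k : ℕ, (fun x : ℝ => x + k * d) ⁻¹' (X \ S)) :=
    isMeagre_iUnion hmk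
  have hdense : Dense (⋃ k : ℕ, (fun x : ℝ => x + k * d) ⁻¹' (X \ S))ᶜ :=
    dense_of_mem_residual hM
  obtain ⟨x, hx1, hx2⟩ := hdense.exists_mem_open isOpen_Ioo
    (Set.nonempty_Ioo.mpr (lt_add_of_pos_right a hd0))
  refine ⟨x, d, hd0, fun k hk => ?_⟩
  simp only [compl_iUnion, mem_iInter, mem_compl_iff, mem_preimage] at hx1
  obtain ⟨hxa, hxad⟩ := hx2
  have hk1 : (k:ℝ) + 1 ≤ n := by exact_mod_cast hk
  have hnd : (n:ℝ) * d = b - a := by rw [hd, mul_div_assoc', mul_div_cancel_left₀ _ hn0.ne']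
  have hkd : x + k * d ≤ b := by nlinarith [hd0, Nat.cast_nonneg (α := ℝ) k]
  have hkx : a ≤ x + k * d := by nlinarith [Nat.cast_nonneg (α := ℝ) k]
  have hmem : x + k * d ∈ X := hX.out ha hb ⟨hkx, hkd⟩
  have := hx1 k
  rw [mem_diff] at this
  push_neg at this
  exact this hmem
end
end

section
/- Let S ⊆ ℝ be a Borel set that is not meager. Then S is RAP: for every integer n ≥ 3, S contains an n-term arithmetic progression. -/
open Set

noncomputable section

/-- A Borel subset of `ℝ` which is not meager is rich in APs. -/
theorem nonmeager_borel_RAP (S : Set ℝ) (hBorel : MeasurableSet S)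
    (hmeager : ¬ IsMeagre S) : RAP S := by
  obtain ⟨u, huo, hSu⟩ := hBorel.residualEq_isOpen
  -- u is nonempty, else S would be meager
  have hune : u.Nonempty := by
    rcases u.eq_empty_or_nonempty with h | h
    · subst h
      exfalso
      apply hmeager
      have : Sᶜ ∈ residual ℝ := by
        refine Filter.mem_of_superset hSu ?_
        intro x hx
        simp only [Set.mem_setOf_eq] at hx
        simp only [Set.mem_compl_iff]
        intro hxS
        have : (∅ : Set ℝ) x := hx ▸ hxS
        exact this
      exact this
    · exact h
  -- M := u \ S is meager
  have hM : IsMeagre (u \ S) := by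
    refine Filter.mem_of_superset hSu ?_
    intro x hx
    simp only [Set.mem_setOf_eq] at hx
    simp only [Set.mem_compl_iff, Set.mem_diff, not_and, not_not]
    intro hxu
    have : S x := hx.symm ▸ (hxu : u x)
    exact this
  obtain ⟨x₀, hx₀⟩ := hune
  obtain ⟨ε, hε, hball⟩ := Metric.isOpen_iff.mp huo x₀ hx₀
  intro n hn
  have hnpos : (0:ℝ) < n := by positivity
  set d : ℝ := ε / (2 * n) with hd
  have hdpos : 0 < d := by positivity
  -- translates of M are meager; intersection of complements is residual
  have hres : {y : ℝ | ∀ k : ℕ, k < n → y + (k:ℝ) * d ∉ u \ S} ∈ residual ℝ := by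
    have : (⋂ k ∈ Finset.range n, ((fun y : ℝ => y + (k:ℝ) * d) ⁻¹' (u \ S))ᶜ) ∈ residual ℝ := by
      refine (Filter.biInter_finset_mem _).mpr fun k _ => ?_
      have : IsMeagre ((fun y : ℝ => y + (k:ℝ) * d) ⁻¹' (u \ S)) :=
        hM.preimage_of_isOpenMap (continuous_add_right _)
          (Homeomorph.addRight ((k:ℝ) * d)).isOpenMap
      exact this
    refine Filter.mem_of_superset this ?_
    intro y hy k hk
    simp only [Set.mem_iInter, Finset.mem_range, Set.mem_compl_iff, Set.mem_preimage] at hy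
    exact hy k hk
  -- pick a starting point in the ball intersected with the residual set
  have hdense := dense_of_mem_residual hres
  obtain ⟨x, hxball, hxres⟩ := hdense.inter_open_nonempty (Metric.ball x₀ (ε/2))
    Metric.isOpen_ball ⟨x₀, Metric.mem_ball_self (half_pos hε)⟩
  refine ⟨x, d, hdpos, fun k hk => ?_⟩
  have hkd : (k:ℝ) * d < ε / 2 := by
    have h1 : (k:ℝ) < n := by exact_mod_cast hk
    calc (k:ℝ) * d < n * d := by nlinarith
    _ = ε / 2 := by field_simp [hd]; rw [hd]; field_simp [hnpos.ne']
  have hmem : x + (k:ℝ) * d ∈ Metric.ball x₀ ε := by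
    rw [Metric.mem_ball, Real.dist_eq] at hxball ⊢
    have hk0 : (0:ℝ) ≤ (k:ℝ) * d := by positivity
    have : |x + (k:ℝ) * d - x₀| ≤ |x - x₀| + (k:ℝ) * d := by
      have := abs_add_le (x - x₀) ((k:ℝ)*d)
      simpa [abs_of_nonneg hk0, add_sub_right_comm] using this
    linarith
  have hu : x + (k:ℝ) * d ∈ u := hball hmem
  have := hxres k hk
  simp only [Set.mem_diff, not_and, not_not] at this
  exact this hu
end
end

section
/- Let C ⊆ [0,1] be a meager subset. Let H⁺ denote the set of increasing homeomorphisms φ : [0,1] → [0,1] (so φ(0)=0, φ(1)=1), regarded as a subspace of the space C([0,1],ℝ) of continuous functions with the supremum metric. Then the set of φ ∈ H⁺ for which φ(C) is FAP is residual in H⁺ (its complement in H⁺ is meager in H⁺). -/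
open Set

noncomputable section

/-- `H⁺`: the strictly increasing homeomorphisms of `[0,1]` onto itself, realized as the
subset of `C([0,1], ℝ)` (carrying the sup-norm topology) consisting of the strictly
increasing continuous functions fixing `0` and `1` (such a map is automatically a
homeomorphism of `[0,1]` onto itself). -/
def Hplus : Set C(Set.Icc (0:ℝ) 1, ℝ) :=
  {f | StrictMono f ∧ f ⟨0, by norm_num⟩ = 0 ∧ f ⟨1, by norm_num⟩ = 1}

/-- The image in `ℝ` of a set `C ⊆ [0,1]` under `f : C([0,1], ℝ)`. -/
def imgC (f : C(Set.Icc (0:ℝ) 1, ℝ)) (C : Set ℝ) : Set ℝ :=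
  ⇑f '' (Subtype.val ⁻¹' C)

/-- `H_ε(C)`: the set of `φ ∈ H⁺` such that `φ(C)` has no 3-term AP of step `d ≥ ε`. -/
def Heps (C : Set ℝ) (ε : ℝ) : Set ↥Hplus :=
  {φ | ¬ ∃ x d : ℝ, ε ≤ d ∧ x ∈ imgC φ.1 C ∧ x + d ∈ imgC φ.1 C ∧ x + 2 * d ∈ imgC φ.1 C}

/-- positive lower bound for a finite set of positives -/
lemma exists_pos_lb {s : Set ℝ} (h : s.Finite) (hp : ∀ x ∈ s, 0 < x) :
    ∃ r, 0 < r ∧ ∀ x ∈ s, r ≤ x := by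
  rcases s.eq_empty_or_nonempty with rfl | hne
  · exact ⟨1, one_pos, by simp⟩
  · have hne' : h.toFinset.Nonempty := by
      rwa [Set.Finite.toFinset_nonempty]
    refine ⟨h.toFinset.min' hne', ?_, ?_⟩
    · exact hp _ ((Set.Finite.mem_toFinset h).1 (Finset.min'_mem _ _))
    · intro x hx
      exact Finset.min'_le _ _ ((Set.Finite.mem_toFinset h).2 hx)

lemma adjmono {x : ℕ → ℝ} {n : ℕ} (hx : ∀ j < n, x j < x (j+1)) :
    ∀ {i j}, i ≤ j → j ≤ n → x i ≤ x j := by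
  intro i j hij hjn
  induction j with
  | zero => simp [Nat.le_zero.mp hij]
  | succ k ih =>
    rcases Nat.eq_or_lt_of_le hij with rfl | h
    · exact le_rfl
    · exact (ih (by omega) (by omega)).trans (hx k (by omega)).le

lemma exists_knot_lt {x : ℕ → ℝ} {n : ℕ} {t : ℝ} (h0 : x 0 ≤ t) (h1 : t < x n) :
    ∃ j < n, x j ≤ t ∧ t < x (j+1) := by
  induction n with
  | zero => exact absurd (h0.trans_lt h1) (lt_irrefl _)
  | succ k ih =>
    rcases le_or_gt (x k) t with h | h
    · exact ⟨k, Nat.lt_succ_self k, h, h1⟩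
    · obtain ⟨j, hj, ha, hb⟩ := ih h
      exact ⟨j, hj.trans (Nat.lt_succ_self k), ha, hb⟩

lemma exists_knot_le {x : ℕ → ℝ} {n : ℕ} (hn : 0 < n) (hx : ∀ j < n, x j < x (j+1))
    {t : ℝ} (h0 : x 0 ≤ t) (h1 : t ≤ x n) :
    ∃ j < n, x j ≤ t ∧ t ≤ x (j+1) := by
  rcases lt_or_eq_of_le h1 with h | rfl
  · obtain ⟨j, hj, ha, hb⟩ := exists_knot_lt h0 h
    exact ⟨j, hj, ha, hb.le⟩
  · refine ⟨n - 1, by omega, ?_, ?_⟩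
    · exact adjmono hx (by omega) (by omega)
    · rw [show n - 1 + 1 = n by omega]
/-- A strictly increasing piecewise linear function through given knots. -/
lemma exists_pl (n : ℕ) (x y : ℕ → ℝ)
    (hx : ∀ j < n, x j < x (j+1)) (hy : ∀ j < n, y j < y (j+1)) :
    ∃ g : ℝ → ℝ, Continuous g ∧ Monotone g ∧
      (∀ u v, x 0 ≤ u → u < v → v ≤ x n → g u < g v) ∧
      (∀ j, j ≤ n → g (x j) = y j) := by
  classical
  set σ : ℕ → ℝ := fun i => (y (i+1) - y i) / (x (i+1) - x i) with hσ
  have hσpos : ∀ i < n, 0 < σ i := fun i hi =>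
    div_pos (sub_pos.2 (hy i hi)) (sub_pos.2 (hx i hi))
  set g : ℝ → ℝ :=
    fun u => y 0 + ∑ i ∈ Finset.range n, σ i * (min (max u (x i)) (x (i+1)) - x i) with hg
  have hclampmono : ∀ i : ℕ, Monotone fun u : ℝ => min (max u (x i)) (x (i+1)) :=
    fun i => ((monotone_id.max monotone_const).min monotone_const)
  have hterm : ∀ i ∈ Finset.range n, ∀ (u v : ℝ), u ≤ v →
      σ i * (min (max u (x i)) (x (i+1)) - x i) ≤ σ i * (min (max v (x i)) (x (i+1)) - x i) := by
    intro i hi u v huv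
    exact mul_le_mul_of_nonneg_left (sub_le_sub_right (hclampmono i huv) _)
      (hσpos i (Finset.mem_range.1 hi)).le
  have hmono : Monotone g := by
    intro u v huv
    exact add_le_add le_rfl (Finset.sum_le_sum fun i hi => hterm i hi u v huv)
  refine ⟨g, ?_, hmono, ?_, ?_⟩
  · apply continuous_const.add
    apply continuous_finset_sum
    intro i _
    exact continuous_const.mul
      (((continuous_id.max continuous_const).min continuous_const).sub continuous_const)
  · intro u v hu huv hv
    have hun : u < x n := lt_of_lt_of_le huv hv
    obtain ⟨j, hj, hju, hjv⟩ := exists_knot_lt hu hun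
    have hsum : ∑ i ∈ Finset.range n, σ i * (min (max u (x i)) (x (i+1)) - x i)
        < ∑ i ∈ Finset.range n, σ i * (min (max v (x i)) (x (i+1)) - x i) := by
      apply Finset.sum_lt_sum (fun i hi => hterm i hi u v huv.le)
      refine ⟨j, Finset.mem_range.2 hj, ?_⟩
      apply mul_lt_mul_of_pos_left _ (hσpos j hj)
      apply sub_lt_sub_right
      have h1 : min (max u (x j)) (x (j+1)) = u := by
        rw [max_eq_left hju, min_eq_left hjv.le]
      have h2 : max v (x j) = v := max_eq_left (hju.trans huv.le)
      rw [h1, h2]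
      exact lt_min huv hjv
    simpa [hg] using add_lt_add_left hsum (y 0)
  · intro j hj
    have hterms : ∀ i ∈ Finset.range n, σ i * (min (max (x j) (x i)) (x (i+1)) - x i)
        = if i < j then y (i+1) - y i else 0 := by
      intro i hi
      rw [Finset.mem_range] at hi
      by_cases h : i < j
      · have h1 : x (i+1) ≤ x j := adjmono hx (by omega) hj
        have h2 : x i ≤ x j := adjmono hx (by omega) hj
        rw [if_pos h, max_eq_left h2, min_eq_right h1, hσ]
        rw [div_mul_cancel₀]
        exact ne_of_gt (sub_pos.2 (hx i hi))
      · have h2 : x j ≤ x i := adjmono hx (by omega) (by omega)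
        rw [if_neg h, max_eq_right h2, min_eq_left (hx i hi).le, sub_self, mul_zero]
    have : g (x j) = y 0 + ∑ i ∈ Finset.range n, if i < j then y (i+1) - y i else 0 := by
      rw [hg]
      exact congrArg _ (Finset.sum_congr rfl hterms)
    rw [this, ← Finset.sum_filter]
    have hfil : (Finset.range n).filter (fun i => i < j) = Finset.range j := by
      ext i
      simp only [Finset.mem_filter, Finset.mem_range]
      omega
    rw [hfil, Finset.sum_range_sub (f := y)]
    ring
def noAP (S : Set ℝ) : Prop :=
  ∀ a ∈ S, ∀ b ∈ S, ∀ c ∈ S, a ≠ b → a ≠ c → b ≠ c → a + c ≠ 2 * b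

lemma exists_lambda_chain (s : ℕ → ℝ) :
    ∀ m : ℕ, (∀ i, 1 ≤ i → i ≤ m → s i < s (i+1)) →
    ∃ f : ℕ → ℝ, (∀ i, 1 ≤ i → i ≤ m → f i ∈ Set.Ioo (s i) (s (i+1))) ∧
      noAP (({0, 1} : Set ℝ) ∪ f '' Set.Icc 1 m) := by
  intro m
  induction m with
  | zero =>
    intro _
    refine ⟨fun _ => 0, fun i h1 h2 => by omega, ?_⟩
    have : (({0, 1} : Set ℝ) ∪ (fun _ => (0:ℝ)) '' Set.Icc 1 0) = {0, 1} := by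
      simp [Set.Icc_eq_empty_of_lt]
    rw [this]
    rintro a ha b hb c hc hab hac hbc
    simp only [Set.mem_insert_iff, Set.mem_singleton_iff] at ha hb hc
    rcases ha with rfl|rfl <;> rcases hb with rfl|rfl <;> rcases hc with rfl|rfl <;>
      simp_all
  | succ m ih =>
    intro hs
    obtain ⟨f, hf1, hf2⟩ := ih (fun i h1 h2 => hs i h1 (by omega))
    set S : Set ℝ := ({0, 1} : Set ℝ) ∪ f '' Set.Icc 1 m with hSdef
    have hSfin : S.Finite :=
      ((Set.finite_singleton (1:ℝ)).insert 0).union ((Set.finite_Icc 1 m).image f)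
    set bad : Set ℝ := Set.image2 (fun a b => 2*b - a) S S ∪
      Set.image2 (fun a b => (a+b)/2) S S with hbaddef
    have hbadfin : bad.Finite := (hSfin.image2 _ hSfin).union (hSfin.image2 _ hSfin)
    have hIoo : (Set.Ioo (s (m+1)) (s (m+1+1))).Infinite :=
      Set.Ioo_infinite (hs (m+1) (by omega) le_rfl)
    obtain ⟨lam, hlam⟩ := (hIoo.diff hbadfin).nonempty
    rw [Set.mem_diff] at hlam
    refine ⟨Function.update f (m+1) lam, ?_, ?_⟩
    · intro i h1 h2
      rcases eq_or_ne i (m+1) with rfl | hne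
      · simpa [Function.update_self] using hlam.1
      · rw [Function.update_of_ne hne]
        exact hf1 i h1 (by omega)
    · have himg : Function.update f (m+1) lam '' Set.Icc 1 (m+1)
          = (f '' Set.Icc 1 m) ∪ {lam} := by
        ext z
        constructor
        · rintro ⟨i, hi, rfl⟩
          simp only [Set.mem_Icc] at hi
          rcases eq_or_ne i (m+1) with rfl | hne
          · exact Or.inr (by simp [Function.update_self])
          · rw [Function.update_of_ne hne]
            exact Or.inl ⟨i, Set.mem_Icc.2 ⟨hi.1, by omega⟩, rfl⟩
        · rintro (⟨i, hi, rfl⟩ | hz)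
          · simp only [Set.mem_Icc] at hi
            refine ⟨i, Set.mem_Icc.2 ⟨hi.1, by omega⟩, ?_⟩
            rw [Function.update_of_ne (by omega)]
          · exact ⟨m+1, Set.mem_Icc.2 ⟨by omega, le_rfl⟩,
              by rw [Set.mem_singleton_iff] at hz; rw [Function.update_self, hz]⟩
      have hset : (({0, 1} : Set ℝ) ∪ Function.update f (m+1) lam '' Set.Icc 1 (m+1))
          = S ∪ {lam} := by rw [himg, hSdef, Set.union_assoc]
      rw [hset]
      intro a ha b hb c hc hab hac hbc heq
      have hmem : ∀ z ∈ S ∪ ({lam} : Set ℝ), z ∈ S ∨ z = lam := by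
        intro z hz; rcases hz with h|h
        · exact Or.inl h
        · exact Or.inr h
      rcases hmem a ha with haS | rfl
      · rcases hmem b hb with hbS | rfl
        · rcases hmem c hc with hcS | rfl
          · exact hf2 a haS b hbS c hcS hab hac hbc heq
          · -- c = lam : lam = 2*b - a
            refine hlam.2 (Or.inl ?_)
            rw [show c = 2*b - a by linarith]
            exact Set.mem_image2_of_mem haS hbS
        · -- b = lam : lam = (a+c)/2
          rcases hmem c hc with hcS | rfl
          · refine hlam.2 (Or.inr ?_)
            rw [show b = (a+c)/2 by linarith]
            exact Set.mem_image2_of_mem haS hcS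
          · exact hbc rfl
      · -- a = lam
        rcases hmem b hb with hbS | rfl
        · rcases hmem c hc with hcS | rfl
          · -- lam = 2*b - c
            refine hlam.2 (Or.inl ?_)
            rw [show a = 2*b - c by linarith]
            exact Set.mem_image2_of_mem hcS hbS
          · exact hac rfl
        · exact hab rfl
def badSet (K : Set ℝ) (ε : ℝ) : Set C(Set.Icc (0:ℝ) 1, ℝ) :=
  {f | ∃ a b c : Set.Icc (0:ℝ) 1, a.1 ∈ K ∧ b.1 ∈ K ∧ c.1 ∈ K ∧
      ε ≤ f b - f a ∧ f a + f c = 2 * f b}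

lemma isClosed_badSet {K : Set ℝ} (hK : IsClosed K) (ε : ℝ) : IsClosed (badSet K ε) := by
  set I := Set.Icc (0:ℝ) 1 with hI
  let P := (↥I × ↥I × ↥I)
  let R : Set (P × C(↥I, ℝ)) :=
    {q | (q.1.1.1 ∈ K ∧ q.1.2.1.1 ∈ K ∧ q.1.2.2.1 ∈ K) ∧
      ε ≤ q.2 q.1.2.1 - q.2 q.1.1 ∧ q.2 q.1.1 + q.2 q.1.2.2 = 2 * q.2 q.1.2.1}
  have hAB : badSet K ε = Prod.snd '' R := by
    ext f
    constructor
    · rintro ⟨a, b, c, ha, hb, hc, h1, h2⟩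
      exact ⟨((a, b, c), f), ⟨⟨ha, hb, hc⟩, h1, h2⟩, rfl⟩
    · rintro ⟨⟨⟨a, b, c⟩, f⟩, ⟨⟨ha, hb, hc⟩, h1, h2⟩, rfl⟩
      exact ⟨a, b, c, ha, hb, hc, h1, h2⟩
  rw [hAB]
  have hcomp : CompactSpace P := by infer_instance
  apply isClosedMap_snd_of_compactSpace
  -- R is closed
  have he1 : Continuous fun q : P × C(↥I, ℝ) => q.2 q.1.1 :=
    ContinuousEval.continuous_eval.comp (continuous_snd.prodMk (continuous_fst.fst))
  have he2 : Continuous fun q : P × C(↥I, ℝ) => q.2 q.1.2.1 :=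
    ContinuousEval.continuous_eval.comp (continuous_snd.prodMk (continuous_fst.snd.fst))
  have he3 : Continuous fun q : P × C(↥I, ℝ) => q.2 q.1.2.2 :=
    ContinuousEval.continuous_eval.comp (continuous_snd.prodMk (continuous_fst.snd.snd))
  have h1 : IsClosed {q : P × C(↥I, ℝ) | q.1.1.1 ∈ K} :=
    hK.preimage (continuous_subtype_val.comp (continuous_fst.fst))
  have h2 : IsClosed {q : P × C(↥I, ℝ) | q.1.2.1.1 ∈ K} :=
    hK.preimage (continuous_subtype_val.comp (continuous_fst.snd.fst))
  have h3 : IsClosed {q : P × C(↥I, ℝ) | q.1.2.2.1 ∈ K} :=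
    hK.preimage (continuous_subtype_val.comp (continuous_fst.snd.snd))
  have h4 : IsClosed {q : P × C(↥I, ℝ) | ε ≤ q.2 q.1.2.1 - q.2 q.1.1} :=
    isClosed_le continuous_const (he2.sub he1)
  have h5 : IsClosed {q : P × C(↥I, ℝ) | q.2 q.1.1 + q.2 q.1.2.2 = 2 * q.2 q.1.2.1} :=
    isClosed_eq (he1.add he3) (continuous_const.mul he2)
  exact (h1.inter (h2.inter h3)).inter (h4.inter h5)
set_option maxHeartbeats 2000000 in
lemma dense_avoid (K : Set ℝ) (hKc : IsClosed K) (hKnwd : IsNowhereDense K)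
    {ε : ℝ} (hε : 0 < ε) (φ : C(Set.Icc (0:ℝ) 1, ℝ)) (hφ : φ ∈ Hplus)
    {δ : ℝ} (hδ : 0 < δ) :
    ∃ ψ : C(Set.Icc (0:ℝ) 1, ℝ), ψ ∈ Hplus ∧ dist ψ φ < δ ∧ ψ ∉ badSet K ε := by
  classical
  by_cases hKe : (K ∩ Set.Icc (0:ℝ) 1) = ∅
  · refine ⟨φ, hφ, by simpa using hδ, ?_⟩
    rintro ⟨a, b, c, ha, -, -, -, -⟩
    have : a.1 ∈ K ∩ Set.Icc (0:ℝ) 1 := ⟨ha, a.2⟩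
    rw [hKe] at this
    exact this
  set K₀ : Set ℝ := K ∩ Set.Icc (0:ℝ) 1 with hK₀def
  have hK₀ne : K₀.Nonempty := Set.nonempty_iff_ne_empty.2 hKe
  have hK₀c : IsClosed K₀ := hKc.inter isClosed_Icc
  have hK₀mem : ∀ x : ℝ, x ∈ K → x ∈ Set.Icc (0:ℝ) 1 → x ∈ K₀ := fun x h1 h2 => ⟨h1, h2⟩
  have hK₀sub : K₀ ⊆ K := fun x h => h.1
  clear_value K₀
  have hKint : interior K = ∅ := hKc.isNowhereDense_iff.mp hKnwd
  have havoid : ∀ W : Set ℝ, IsOpen W → W.Nonempty → (W \ K).Nonempty := by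
    intro W hW hWne
    by_contra h
    rw [Set.not_nonempty_iff_eq_empty, Set.diff_eq_empty] at h
    obtain ⟨w, hw⟩ := hWne
    exact absurd (hKint ▸ interior_maximal h hW hw) (Set.notMem_empty w)
  -- the function φ extended to ℝ
  set g₀ : ℝ → ℝ := fun u => φ (Set.projIcc (0:ℝ) 1 zero_le_one u) with hg₀
  have hg₀cont : Continuous g₀ := φ.continuous.comp continuous_projIcc
  have hg₀eq : ∀ u : Set.Icc (0:ℝ) 1, g₀ u.1 = φ u := by
    intro u
    rw [hg₀]
    simp only [Set.projIcc_of_mem zero_le_one u.2]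
  have hg₀0 : g₀ 0 = 0 := by
    rw [hg₀]; simp only [Set.projIcc_left]; exact hφ.2.1
  have hg₀1 : g₀ 1 = 1 := by
    rw [hg₀]; simp only [Set.projIcc_right]; exact hφ.2.2
  have hg₀lt : ∀ u v : ℝ, u ∈ Set.Icc (0:ℝ) 1 → v ∈ Set.Icc (0:ℝ) 1 → u < v →
      g₀ u < g₀ v := by
    intro u v hu hv huv
    have := hφ.1 (show (⟨u, hu⟩ : Set.Icc (0:ℝ) 1) < ⟨v, hv⟩ from Subtype.mk_lt_mk.2 huv)
    rw [hg₀]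
    simpa only [Set.projIcc_of_mem zero_le_one hu, Set.projIcc_of_mem zero_le_one hv] using this
  have hg₀mono : ∀ u v : ℝ, u ∈ Set.Icc (0:ℝ) 1 → v ∈ Set.Icc (0:ℝ) 1 → u ≤ v →
      g₀ u ≤ g₀ v := by
    intro u v hu hv huv
    rcases eq_or_lt_of_le huv with rfl | h
    · exact le_rfl
    · exact (hg₀lt u v hu hv h).le
  clear_value g₀
  -- choice of M
  set M : ℕ := ⌈2/δ⌉₊ with hM
  have hM1 : 1 ≤ M := Nat.one_le_iff_ne_zero.2 (by
    have : 0 < M := Nat.ceil_pos.mpr (by positivity)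
    omega)
  have hMR : (0:ℝ) < (M:ℝ) + 1 := by positivity
  have hMδ : 2/((M:ℝ)+1) < δ := by
    rw [div_lt_iff₀ hMR]
    have h1 : 2/δ ≤ (M:ℝ) := Nat.le_ceil _
    rw [div_le_iff₀ hδ] at h1
    nlinarith
  clear_value M
  -- choice of cut points
  have hkey : ∀ m : ℕ, 1 ≤ m → m ≤ M → ∃ cm : ℝ, cm ∈ Set.Ioo (0:ℝ) 1 ∧ cm ∉ K ∧
      |g₀ cm - (m:ℝ)/((M:ℝ)+1)| < 1/(4*((M:ℝ)+1)) := by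
    intro m h1 h2
    set v : ℝ := (m:ℝ)/((M:ℝ)+1) with hv
    have hm0 : (0:ℝ) < (m:ℝ) := by exact_mod_cast h1
    have hv0 : 0 < v := by positivity
    have hv1 : v < 1 := by
      rw [hv, div_lt_one hMR]
      have : (m:ℝ) ≤ (M:ℝ) := by exact_mod_cast h2
      linarith
    have hart := intermediate_value_Icc (zero_le_one (α := ℝ)) hg₀cont.continuousOn
    have hvmem : v ∈ Set.Icc (g₀ 0) (g₀ 1) := by
      rw [hg₀0, hg₀1]; exact ⟨hv0.le, hv1.le⟩
    obtain ⟨u0, hu0I, hu0⟩ := hart hvmem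
    have hu0' : u0 ∈ Set.Ioo (0:ℝ) 1 := by
      refine ⟨lt_of_le_of_ne hu0I.1 ?_, lt_of_le_of_ne hu0I.2 ?_⟩
      · intro h; rw [← h] at hu0; rw [hg₀0] at hu0; linarith
      · intro h; rw [h] at hu0; rw [hg₀1] at hu0; linarith
    set r : ℝ := 1/(4*((M:ℝ)+1)) with hr
    have hrpos : 0 < r := by positivity
    set W : Set ℝ := Set.Ioo (0:ℝ) 1 ∩ g₀ ⁻¹' (Set.Ioo (v - r) (v + r)) with hW
    have hWopen : IsOpen W := isOpen_Ioo.inter (isOpen_Ioo.preimage hg₀cont)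
    have hWne : W.Nonempty := ⟨u0, hu0', by
      rw [Set.mem_preimage, hu0]; exact ⟨by linarith, by linarith⟩⟩
    obtain ⟨cm, hcmW, hcmK⟩ := havoid W hWopen hWne
    refine ⟨cm, hcmW.1, hcmK, ?_⟩
    have := hcmW.2
    rw [Set.mem_preimage] at this
    rw [abs_lt]
    exact ⟨by linarith [this.1], by linarith [this.2]⟩
  have hkey' : ∀ m : ℕ, ∃ cm : ℝ, 1 ≤ m → m ≤ M → (cm ∈ Set.Ioo (0:ℝ) 1 ∧ cm ∉ K ∧
      |g₀ cm - (m:ℝ)/((M:ℝ)+1)| < 1/(4*((M:ℝ)+1))) := by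
    intro m
    by_cases h : 1 ≤ m ∧ m ≤ M
    · obtain ⟨cm, h1, h2, h3⟩ := hkey m h.1 h.2
      exact ⟨cm, fun _ _ => ⟨h1, h2, h3⟩⟩
    · exact ⟨0, fun hm1 hm2 => absurd ⟨hm1, hm2⟩ h⟩
  choose c hc using hkey'
  have hcI : ∀ m, 1 ≤ m → m ≤ M → c m ∈ Set.Icc (0:ℝ) 1 :=
    fun m h1 h2 => Set.Ioo_subset_Icc_self ((hc m h1 h2).1)
  -- the values s
  set s : ℕ → ℝ := fun m => if m = 0 then 0 else if m ≤ M then g₀ (c m) else 1 with hs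
  have hs0 : s 0 = 0 := by simp [hs]
  have hsM1 : s (M+1) = 1 := by
    rw [hs]; simp only []; rw [if_neg (by omega), if_neg (by omega)]
  have hs_c : ∀ m, 1 ≤ m → m ≤ M → s m = g₀ (c m) := by
    intro m h1 h2
    rw [hs]; simp only []; rw [if_neg (by omega), if_pos h2]
  have hquarter : 4*(1/(4*((M:ℝ)+1))) = 1/((M:ℝ)+1) := by field_simp
  have hrpos4 : (0:ℝ) < 1/(4*((M:ℝ)+1)) := by positivity
  have hs_est : ∀ m, m ≤ M+1 → |s m - (m:ℝ)/((M:ℝ)+1)| ≤ 1/(4*((M:ℝ)+1)) := by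
    intro m hm
    rcases Nat.eq_zero_or_pos m with rfl | hm0
    · rw [hs0]; simp; positivity
    rcases Nat.lt_or_ge m (M+1) with h | h
    · rw [hs_c m hm0 (by omega)]
      exact ((hc m hm0 (by omega)).2.2).le
    · have hmM : m = M+1 := by omega
      subst hmM
      rw [hsM1]
      have : ((M:ℝ)+1)/((M:ℝ)+1) = 1 := div_self (ne_of_gt hMR)
      rw [show ((M+1:ℕ):ℝ) = (M:ℝ)+1 by push_cast; ring, this]
      simp; positivity
  have hs_adj : ∀ m, m ≤ M → s m < s (m+1) := by
    intro m hm
    have e1 := hs_est m (by omega)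
    have e2 := hs_est (m+1) (by omega)
    rw [abs_le] at e1 e2
    have key : ((m+1:ℕ):ℝ)/((M:ℝ)+1) - ((m:ℕ):ℝ)/((M:ℝ)+1) = 1/((M:ℝ)+1) := by
      push_cast; ring
    linarith [e1.1, e1.2, e2.1, e2.2, hquarter, hrpos4]
  clear_value s
  have hc_lt : ∀ m, 1 ≤ m → m < M → c m < c (m+1) := by
    intro m h1 h2
    have hg : g₀ (c m) < g₀ (c (m+1)) := by
      have := hs_adj m h2.le
      rwa [hs_c m h1 h2.le, hs_c (m+1) (by omega) (by omega)] at this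
    by_contra h
    push_neg at h
    have := hg₀mono _ _ (hcI (m+1) (by omega) (by omega)) (hcI m h1 h2.le) h
    linarith
  -- the lambda chain
  obtain ⟨f, hf1, hf2⟩ := exists_lambda_chain s (M-1) (fun i h1 h2 => hs_adj i (by omega))
  set T : Set ℝ := ({0, 1} : Set ℝ) ∪ f '' Set.Icc 1 (M-1) with hT
  set t : ℕ → ℝ := fun m => if m = 0 then 0 else if m = M then 1 else f m with ht
  have ht0 : t 0 = 0 := by simp [ht]
  have htM : t M = 1 := by
    rw [ht]; simp only []; rw [if_neg (show ¬ M = 0 by omega)]; simp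
  have ht_mid : ∀ m, 1 ≤ m → m ≤ M-1 → t m = f m := by
    intro m h1 h2
    rw [ht]; simp only []; rw [if_neg (by omega), if_neg (by omega)]
  have htT : ∀ m, m ≤ M → t m ∈ T := by
    intro m hm
    rcases Nat.eq_zero_or_pos m with rfl | hm0
    · rw [ht0]; exact Or.inl (Or.inl rfl)
    rcases eq_or_ne m M with he' | hne
    · subst m
      rw [htM]; exact Or.inl (Or.inr rfl)
    · rw [ht_mid m hm0 (by omega)]
      exact Or.inr ⟨m, Set.mem_Icc.2 ⟨hm0, by omega⟩, rfl⟩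
  have hts : ∀ m, 1 ≤ m → m ≤ M → t (m-1) < s m ∧ s m < t m := by
    intro m h1 h2
    constructor
    · rcases eq_or_ne m 1 with rfl | hne
      · rw [show (1:ℕ)-1 = 0 from rfl, ht0]
        have e1 := hs_est 1 (by omega)
        rw [abs_le] at e1
        have : ((1:ℕ):ℝ)/((M:ℝ)+1) = 1/((M:ℝ)+1) := by norm_num
        rw [this] at e1
        linarith [e1.1, hquarter, hrpos4]
      · have h1' : 2 ≤ m := by omega
        have := (hf1 (m-1) (by omega) (by omega)).2
        rw [show m-1+1 = m by omega] at this
        rwa [ht_mid (m-1) (by omega) (by omega)]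
    · rcases eq_or_ne m M with he' | hne
      · subst m
        rw [htM]
        have e1 := hs_est M (by omega)
        rw [abs_le] at e1
        have hMd : ((M:ℕ):ℝ)/((M:ℝ)+1) = 1 - 1/((M:ℝ)+1) := by
          field_simp
          ring
        rw [hMd] at e1
        linarith [e1.2, hquarter, hrpos4]
      · rw [ht_mid m h1 (by omega)]
        exact (hf1 m h1 (by omega)).1
  clear_value t
  -- finite margin over AP triples
  have hTfin : T.Finite :=
    (((Set.finite_singleton (1:ℝ)).insert 0)).union ((Set.finite_Icc 1 (M-1)).image f)
  clear_value T
  set V : Set ℝ := (fun p : ℝ×ℝ×ℝ => |p.1 + p.2.2 - 2*p.2.1|) ''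
      {p : ℝ×ℝ×ℝ | (p.1 ∈ T ∧ p.2.1 ∈ T ∧ p.2.2 ∈ T) ∧
        p.1 ≠ p.2.1 ∧ p.1 ≠ p.2.2 ∧ p.2.1 ≠ p.2.2} with hV
  have hVfin : V.Finite := by
    apply Set.Finite.image
    apply Set.Finite.subset (hTfin.prod (hTfin.prod hTfin))
    rintro ⟨a, b, c⟩ ⟨⟨h1, h2, h3⟩, -⟩
    exact ⟨h1, h2, h3⟩
  have hVpos : ∀ z ∈ V, 0 < z := by
    rintro z ⟨⟨a, b, c⟩, ⟨⟨h1, h2, h3⟩, d1, d2, d3⟩, rfl⟩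
    exact abs_pos.2 (sub_ne_zero.2 (hf2 a h1 b h2 c h3 d1 d2 d3))
  have hVmem : ∀ a b c : ℝ, a ∈ T → b ∈ T → c ∈ T → a ≠ b → a ≠ c → b ≠ c →
      |a + c - 2*b| ∈ V :=
    fun a b c h1 h2 h3 d1 d2 d3 => ⟨(a, b, c), ⟨⟨h1, h2, h3⟩, d1, d2, d3⟩, rfl⟩
  obtain ⟨ρ₁, hρ₁pos, hρ₁⟩ := exists_pos_lb hVfin hVpos
  clear_value V
  set V₂ : Set ℝ := (fun m => s m - t (m-1)) '' Set.Icc 1 M ∪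
      (fun m => t m - s m) '' Set.Icc 1 M with hV₂
  have hV₂fin : V₂.Finite :=
    ((Set.finite_Icc 1 M).image _).union ((Set.finite_Icc 1 M).image _)
  have hV₂pos : ∀ z ∈ V₂, 0 < z := by
    rintro z (⟨m, hm, rfl⟩ | ⟨m, hm, rfl⟩) <;> rw [Set.mem_Icc] at hm
    · exact sub_pos.2 (hts m hm.1 hm.2).1
    · exact sub_pos.2 (hts m hm.1 hm.2).2
  obtain ⟨ρ₂, hρ₂pos, hρ₂⟩ := exists_pos_lb hV₂fin hV₂pos
  set ρ : ℝ := min (min (ρ₁/8) (ρ₂/2)) (ε/4) with hρdef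
  have hρpos : 0 < ρ := lt_min (lt_min (by positivity) (by positivity)) (by positivity)
  have hρa : ρ ≤ ρ₁/8 := le_trans (min_le_left _ _) (min_le_left _ _)
  have hρb : ρ ≤ ρ₂/2 := le_trans (min_le_left _ _) (min_le_right _ _)
  have hρε : 4*ρ ≤ ε := by
    have := min_le_right (min (ρ₁/8) (ρ₂/2)) (ε/4)
    rw [← hρdef] at this
    linarith
  have hρV : ∀ z ∈ V, 4*ρ < z := fun z hz => lt_of_lt_of_le (by linarith) (hρ₁ z hz)
  have hρV₂ : ∀ m, 1 ≤ m → m ≤ M → ρ < s m - t (m-1) ∧ ρ < t m - s m := by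
    intro m h1 h2
    constructor
    · exact lt_of_lt_of_le (by linarith) (hρ₂ _ (Or.inl ⟨m, Set.mem_Icc.2 ⟨h1, h2⟩, rfl⟩))
    · exact lt_of_lt_of_le (by linarith) (hρ₂ _ (Or.inr ⟨m, Set.mem_Icc.2 ⟨h1, h2⟩, rfl⟩))
  clear_value V₂ ρ
  -- gamma
  set G : Set ℝ := (fun m => Metric.infDist (c m) K₀) '' Set.Icc 1 M ∪
      ((fun m => c (m+1) - c m) '' Set.Icc 1 (M-1) ∪ {c 1, 1 - c M}) with hG
  have hGfin : G.Finite :=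
    ((Set.finite_Icc 1 M).image _).union (((Set.finite_Icc 1 (M-1)).image _).union
      ((Set.finite_singleton _).insert _))
  have hGpos : ∀ z ∈ G, 0 < z := by
    rintro z (⟨m, hm, rfl⟩ | (⟨m, hm, rfl⟩ | hz)) 
    · rw [Set.mem_Icc] at hm
      have : c m ∉ K₀ := fun h => (hc m hm.1 hm.2).2.1 (hK₀sub h)
      exact (hK₀c.notMem_iff_infDist_pos hK₀ne).1 this
    · rw [Set.mem_Icc] at hm
      exact sub_pos.2 (hc_lt m hm.1 (by omega))
    · rcases hz with rfl | hz
      · exact ((hc 1 le_rfl hM1).1).1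
      · rw [Set.mem_singleton_iff] at hz
        rw [hz]
        exact sub_pos.2 ((hc M hM1 le_rfl).1).2
  obtain ⟨γ₄, hγ₄pos, hγ₄⟩ := exists_pos_lb hGfin hGpos
  set γ : ℝ := γ₄/4 with hγdef
  have hγpos : 0 < γ := by positivity
  have hγK : ∀ m, 1 ≤ m → m ≤ M → 4*γ ≤ Metric.infDist (c m) K₀ := by
    intro m h1 h2
    have := hγ₄ _ (Or.inl ⟨m, Set.mem_Icc.2 ⟨h1, h2⟩, rfl⟩)
    linarith
  have hγgap : ∀ m, 1 ≤ m → m ≤ M-1 → 4*γ ≤ c (m+1) - c m := by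
    intro m h1 h2
    have := hγ₄ _ (Or.inr (Or.inl ⟨m, Set.mem_Icc.2 ⟨h1, h2⟩, rfl⟩))
    simp only [] at this
    linarith
  have hγ1 : 4*γ ≤ c 1 := by
    have := hγ₄ _ (Or.inr (Or.inr (Or.inl rfl)))
    linarith
  have hγM : 4*γ ≤ 1 - c M := by
    have := hγ₄ _ (Or.inr (Or.inr (Or.inr rfl)))
    linarith
  clear_value G γ
  -- knot sequences
  set X : ℕ → ℝ := fun j => if j = 0 then 0 else if 3*M+1 ≤ j then 1 else
    if j % 3 = 0 then c (j/3) + γ else if j % 3 = 1 then c (j/3 + 1) - γ else c (j/3 + 1)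
    with hXdef
  set Y : ℕ → ℝ := fun j => if j = 0 then 0 else if 3*M+1 ≤ j then 1 else
    if j % 3 = 0 then t (j/3) - ρ else if j % 3 = 1 then t (j/3) + ρ else s (j/3 + 1)
    with hYdef
  have hX0 : X 0 = 0 := by simp [hXdef]
  have hXN : X (3*M+1) = 1 := by
    rw [hXdef]; simp only []; rw [if_neg (by omega), if_pos (by omega)]
  have hY0 : Y 0 = 0 := by simp [hYdef]
  have hYN : Y (3*M+1) = 1 := by
    rw [hYdef]; simp only []; rw [if_neg (by omega), if_pos (by omega)]
  have hXf0 : ∀ m, 1 ≤ m → m ≤ M → X (3*m) = c m + γ := by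
    intro m h1 h2
    rw [hXdef]; simp only []
    rw [if_neg (by omega), if_neg (by omega), if_pos (by omega),
      show 3*m/3 = m by omega]
  have hXf1 : ∀ m, m ≤ M-1 → X (3*m+1) = c (m+1) - γ := by
    intro m h2
    rw [hXdef]; simp only []
    rw [if_neg (by omega), if_neg (by omega), if_neg (by omega), if_pos (by omega),
      show (3*m+1)/3 = m by omega]
  have hXc : ∀ m, m ≤ M-1 → X (3*m+2) = c (m+1) := by
    intro m h2
    rw [hXdef]; simp only []
    rw [if_neg (by omega), if_neg (by omega), if_neg (by omega), if_neg (by omega),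
      show (3*m+2)/3 = m by omega]
  have hYf0 : ∀ m, 1 ≤ m → m ≤ M → Y (3*m) = t m - ρ := by
    intro m h1 h2
    rw [hYdef]; simp only []
    rw [if_neg (by omega), if_neg (by omega), if_pos (by omega),
      show 3*m/3 = m by omega]
  have hYf1 : ∀ m, m ≤ M-1 → Y (3*m+1) = t m + ρ := by
    intro m h2
    rw [hYdef]; simp only []
    rw [if_neg (by omega), if_neg (by omega), if_neg (by omega), if_pos (by omega),
      show (3*m+1)/3 = m by omega]
  have hYc : ∀ m, m ≤ M-1 → Y (3*m+2) = s (m+1) := by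
    intro m h2
    rw [hYdef]; simp only []
    rw [if_neg (by omega), if_neg (by omega), if_neg (by omega), if_neg (by omega),
      show (3*m+2)/3 = m by omega]
  clear_value X Y
  have hXadj : ∀ j < 3*M+1, X j < X (j+1) := by
    intro j hj
    rcases Nat.eq_zero_or_pos j with rfl | hj0
    · rw [hX0, show (0:ℕ)+1 = 3*0+1 from rfl, hXf1 0 (by omega)]
      linarith [hγ1, hγpos]
    obtain ⟨m, h3⟩ : ∃ m, j = 3*m ∨ j = 3*m+1 ∨ j = 3*m+2 := ⟨j/3, by omega⟩
    rcases h3 with he | he | he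
    · -- j = 3m, m ≥ 1
      have hm1 : 1 ≤ m := by omega
      rcases eq_or_ne m M with he' | hne
      · subst m
        rw [he, hXf0 M hm1 le_rfl, show 3*M+1 = 3*M+1 from rfl]
        rw [show (3*M)+1 = 3*M+1 from rfl, hXN]
        linarith [hγM, hγpos]
      · have hmM : m ≤ M-1 := by omega
        rw [he, hXf0 m hm1 (by omega), show 3*m+1 = 3*m+1 from rfl, hXf1 m hmM]
        have := hγgap m hm1 hmM
        linarith [hγpos]
    · -- j = 3m+1
      have hmM : m ≤ M-1 := by omega
      rw [he, hXf1 m hmM, show 3*m+1+1 = 3*m+2 from rfl, hXc m hmM]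
      linarith [hγpos]
    · -- j = 3m+2
      have hmM : m ≤ M-1 := by omega
      rw [he, hXc m hmM, show 3*m+2+1 = 3*(m+1) by ring, hXf0 (m+1) (by omega) (by omega)]
      linarith [hγpos]
  have hYadj : ∀ j < 3*M+1, Y j < Y (j+1) := by
    intro j hj
    rcases Nat.eq_zero_or_pos j with rfl | hj0
    · rw [hY0, show (0:ℕ)+1 = 3*0+1 from rfl, hYf1 0 (by omega), ht0]
      linarith [hρpos]
    obtain ⟨m, h3⟩ : ∃ m, j = 3*m ∨ j = 3*m+1 ∨ j = 3*m+2 := ⟨j/3, by omega⟩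
    rcases h3 with he | he | he
    · have hm1 : 1 ≤ m := by omega
      rcases eq_or_ne m M with he' | hne
      · subst m
        rw [he, hYf0 M hm1 le_rfl, htM, show (3*M)+1 = 3*M+1 from rfl, hYN]
        linarith [hρpos]
      · have hmM : m ≤ M-1 := by omega
        rw [he, hYf0 m hm1 (by omega), show 3*m+1 = 3*m+1 from rfl, hYf1 m hmM]
        linarith [hρpos]
    · have hmM : m ≤ M-1 := by omega
      rw [he, hYf1 m hmM, show 3*m+1+1 = 3*m+2 from rfl, hYc m hmM]
      have := (hρV₂ (m+1) (by omega) (by omega)).1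
      rw [show m+1-1 = m by omega] at this
      linarith
    · have hmM : m ≤ M-1 := by omega
      rw [he, hYc m hmM, show 3*m+2+1 = 3*(m+1) by ring, hYf0 (m+1) (by omega) (by omega)]
      have := (hρV₂ (m+1) (by omega) (by omega)).2
      linarith
  obtain ⟨g, hgc, hgmono, hgstrict, hgval⟩ := exists_pl (3*M+1) X Y hXadj hYadj
  have hg0 : g 0 = 0 := by
    have := hgval 0 (by omega)
    rwa [hX0, hY0] at this
  have hg1 : g 1 = 1 := by
    have := hgval (3*M+1) le_rfl
    rwa [hXN, hYN] at this
  set ψ : C(Set.Icc (0:ℝ) 1, ℝ) := ⟨fun u => g u.1, hgc.comp continuous_subtype_val⟩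
    with hψdef
  have hψval : ∀ u : Set.Icc (0:ℝ) 1, ψ u = g u.1 := fun u => rfl
  clear_value ψ
  have hψH : ψ ∈ Hplus := by
    refine ⟨?_, ?_, ?_⟩
    · intro u v huv
      rw [hψval, hψval]
      exact hgstrict u.1 v.1 (by rw [hX0]; exact u.2.1) (Subtype.coe_lt_coe.2 huv)
        (by rw [hXN]; exact v.2.2)
    · exact (hψval _).trans hg0
    · exact (hψval _).trans hg1
  -- extended cut sequence
  set C' : ℕ → ℝ := fun m => if m = 0 then 0 else if m ≤ M then c m else 1 with hC'def
  have hC'0 : C' 0 = 0 := by simp [hC'def]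
  have hC'M1 : C' (M+1) = 1 := by
    rw [hC'def]; simp only []; rw [if_neg (by omega), if_neg (by omega)]
  have hC'c : ∀ m, 1 ≤ m → m ≤ M → C' m = c m := by
    intro m h1 h2
    rw [hC'def]; simp only []; rw [if_neg (by omega), if_pos h2]
  have hC'mem : ∀ m, m ≤ M+1 → C' m ∈ Set.Icc (0:ℝ) 1 := by
    intro m hm
    rcases Nat.eq_zero_or_pos m with rfl | h0
    · rw [hC'0]; exact ⟨le_rfl, zero_le_one⟩
    rcases Nat.lt_or_ge m (M+1) with h | h
    · rw [hC'c m h0 (by omega)]; exact hcI m h0 (by omega)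
    · rw [show m = M+1 by omega, hC'M1]; exact ⟨zero_le_one, le_rfl⟩
  have hC'adj : ∀ m < M+1, C' m < C' (m+1) := by
    intro m hm
    rcases Nat.eq_zero_or_pos m with rfl | h0
    · rw [hC'0, hC'c 1 le_rfl hM1]
      exact ((hc 1 le_rfl hM1).1).1
    rcases eq_or_ne m M with he' | hne
    · subst m
      rw [hC'c M hM1 le_rfl, hC'M1]
      exact ((hc M hM1 le_rfl).1).2
    · rw [hC'c m h0 (by omega), hC'c (m+1) (by omega) (by omega)]
      exact hc_lt m h0 (by omega)
  have hsC' : ∀ m, m ≤ M+1 → s m = g₀ (C' m) := by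
    intro m hm
    rcases Nat.eq_zero_or_pos m with rfl | h0
    · rw [hs0, hC'0, hg₀0]
    rcases Nat.lt_or_ge m (M+1) with h | h
    · rw [hC'c m h0 (by omega), hs_c m h0 (by omega)]
    · rw [show m = M+1 by omega, hC'M1, hsM1, hg₀1]
  have hgC' : ∀ m, m ≤ M+1 → g (C' m) = s m := by
    intro m hm
    rcases Nat.eq_zero_or_pos m with rfl | h0
    · rw [hC'0, hg0, hs0]
    rcases Nat.lt_or_ge m (M+1) with h | h
    · have e1 : X (3*(m-1)+2) = c ((m-1)+1) := hXc (m-1) (by omega)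
      rw [show (m-1)+1 = m by omega] at e1
      have e2 : Y (3*(m-1)+2) = s ((m-1)+1) := hYc (m-1) (by omega)
      rw [show (m-1)+1 = m by omega] at e2
      rw [hC'c m h0 (by omega), ← e1, hgval _ (by omega), e2]
    · rw [show m = M+1 by omega, hC'M1, hg1, hsM1]
  clear_value C'
  -- distance bound
  have hdistb : ∀ u : Set.Icc (0:ℝ) 1, dist (ψ u) (φ u) ≤ 2/((M:ℝ)+1) := by
    intro u
    have hu1 : C' 0 ≤ u.1 := by rw [hC'0]; exact u.2.1
    have hu2 : u.1 ≤ C' (M+1) := by rw [hC'M1]; exact u.2.2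
    obtain ⟨j, hj, hju, hju2⟩ := exists_knot_le (by omega) hC'adj hu1 hu2
    have hjM : j ≤ M := by omega
    have hφ1 : s j ≤ φ u := by
      rw [← hg₀eq u, hsC' j (by omega)]
      exact hg₀mono _ _ (hC'mem j (by omega)) u.2 hju
    have hφ2 : φ u ≤ s (j+1) := by
      rw [← hg₀eq u, hsC' (j+1) (by omega)]
      exact hg₀mono _ _ u.2 (hC'mem (j+1) (by omega)) hju2
    have hψ1 : s j ≤ ψ u := by
      rw [hψval, ← hgC' j (by omega)]
      exact hgmono hju
    have hψ2 : ψ u ≤ s (j+1) := by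
      rw [hψval, ← hgC' (j+1) (by omega)]
      exact hgmono hju2
    have e1 := hs_est j (by omega)
    have e2 := hs_est (j+1) (by omega)
    rw [abs_le] at e1 e2
    have key : ((j+1:ℕ):ℝ)/((M:ℝ)+1) - ((j:ℕ):ℝ)/((M:ℝ)+1) = 1/((M:ℝ)+1) := by
      push_cast; ring
    have h2R : 2/((M:ℝ)+1) = 2*(1/((M:ℝ)+1)) := by ring
    rw [Real.dist_eq, abs_le]
    constructor <;> linarith [e1.1, e1.2, e2.1, e2.2, hquarter, hrpos4, h2R]
  have hdist : dist ψ φ < δ :=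
    lt_of_le_of_lt ((ContinuousMap.dist_le (by positivity)).2 hdistb) hMδ
  -- localization of K-points
  have hloc : ∀ u : Set.Icc (0:ℝ) 1, u.1 ∈ K → ∃ m, m ≤ M ∧ |ψ u - t m| ≤ ρ := by
    intro u huK
    have huK₀ : u.1 ∈ K₀ := hK₀mem u.1 huK u.2
    have hu1 : C' 0 ≤ u.1 := by rw [hC'0]; exact u.2.1
    have hu2 : u.1 ≤ C' (M+1) := by rw [hC'M1]; exact u.2.2
    obtain ⟨j, hj, hju, hju2⟩ := exists_knot_le (by omega) hC'adj hu1 hu2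
    have hjM : j ≤ M := by omega
    have hdistKm : ∀ m, 1 ≤ m → m ≤ M → 4*γ ≤ |c m - u.1| := by
      intro m h1 h2
      have h := Metric.infDist_le_dist_of_mem huK₀ (x := c m)
      rw [Real.dist_eq] at h
      exact le_trans (hγK m h1 h2) h
    have hlow : X (3*j) ≤ u.1 := by
      rcases Nat.eq_zero_or_pos j with rfl | hj1
      · rw [show 3*0 = 0 from rfl, hX0]; exact u.2.1
      · rw [hXf0 j hj1 hjM]
        have hd := hdistKm j hj1 hjM
        have hcj : c j ≤ u.1 := by rw [← hC'c j hj1 hjM]; exact hju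
        rw [abs_of_nonpos (by linarith)] at hd
        linarith
    have hhigh : u.1 ≤ X (3*j+1) := by
      rcases eq_or_ne j M with he' | hne
      · subst j
        rw [hXN]; exact u.2.2
      · have hjM1 : j ≤ M-1 := by omega
        rw [hXf1 j hjM1]
        have hd := hdistKm (j+1) (by omega) (by omega)
        have hcj : u.1 ≤ c (j+1) := by rw [← hC'c (j+1) (by omega) (by omega)]; exact hju2
        rw [abs_of_nonneg (by linarith)] at hd
        linarith
    refine ⟨j, hjM, ?_⟩
    have hb1 : Y (3*j) ≤ ψ u := by
      rw [hψval, ← hgval (3*j) (by omega)]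
      exact hgmono hlow
    have hb2 : ψ u ≤ Y (3*j+1) := by
      rw [hψval, ← hgval (3*j+1) (by omega)]
      exact hgmono hhigh
    have hYl : t j - ρ ≤ Y (3*j) := by
      rcases Nat.eq_zero_or_pos j with rfl | hj1
      · rw [show 3*0 = 0 from rfl, hY0, ht0]; linarith [hρpos]
      · rw [hYf0 j hj1 hjM]
    have hYu : Y (3*j+1) ≤ t j + ρ := by
      rcases eq_or_ne j M with he' | hne
      · subst j
        rw [hYN, htM]; linarith [hρpos]
      · rw [hYf1 j (by omega)]
    rw [abs_le]
    constructor <;> linarith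
  -- conclusion
  refine ⟨ψ, hψH, hdist, ?_⟩
  rintro ⟨a, b, c', ha, hb, hc', h1, h2⟩
  obtain ⟨ma, hma, ea⟩ := hloc a ha
  obtain ⟨mb, hmb, eb⟩ := hloc b hb
  obtain ⟨mc, hmc, ec⟩ := hloc c' hc'
  rw [abs_le] at ea eb ec
  have htab : t ma < t mb := by linarith [ea.1, ea.2, eb.1, eb.2, hρε, hρpos]
  have htbc : t mb < t mc := by linarith [eb.1, eb.2, ec.1, ec.2, hρε, hρpos]
  have htac : t ma < t mc := htab.trans htbc
  have hmemV : |t ma + t mc - 2*(t mb)| ∈ V :=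
    hVmem _ _ _ (htT ma hma) (htT mb hmb) (htT mc hmc)
      (ne_of_lt htab) (ne_of_lt htac) (ne_of_lt htbc)
  have h4 := hρV _ hmemV
  have h5 : |t ma + t mc - 2*(t mb)| ≤ 4*ρ := by
    rw [abs_le]
    constructor <;> linarith [ea.1, ea.2, eb.1, eb.2, ec.1, ec.2]
  linarith
lemma isMeagre_of_isNowhereDense {X : Type*} [TopologicalSpace X] {s : Set X}
    (h : IsNowhereDense s) : IsMeagre s :=
  isMeagre_iff_countable_union_isNowhereDense.mpr
    ⟨{s}, by simpa using h, Set.countable_singleton s, by simp⟩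

lemma nwd_union_s8 {X : Type*} [TopologicalSpace X] {s t : Set X}
    (hs : IsClosed s) (hs' : IsNowhereDense s) (ht : IsClosed t) (ht' : IsNowhereDense t) :
    IsClosed (s ∪ t) ∧ IsNowhereDense (s ∪ t) := by
  have h1 := isClosed_isNowhereDense_iff_compl.mp ⟨hs, hs'⟩
  have h2 := isClosed_isNowhereDense_iff_compl.mp ⟨ht, ht'⟩
  apply isClosed_isNowhereDense_iff_compl.mpr
  rw [Set.compl_union]
  exact ⟨h1.1.inter h2.1, h1.2.inter_of_isOpen_left h2.2 h1.1⟩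

lemma badSet_nwd {K : Set ℝ} (hKc : IsClosed K) (hKnwd : IsNowhereDense K)
    {ε : ℝ} (hε : 0 < ε) :
    IsNowhereDense (Subtype.val ⁻¹' badSet K ε : Set ↥Hplus) := by
  have hcl : IsClosed (Subtype.val ⁻¹' badSet K ε : Set ↥Hplus) :=
    (isClosed_badSet hKc ε).preimage continuous_subtype_val
  rw [hcl.isNowhereDense_iff, interior_eq_empty_iff_dense_compl, Metric.dense_iff]
  intro x r hr
  obtain ⟨ψ, hψH, hd, hb⟩ := dense_avoid K hKc hKnwd hε x.1 x.2 hr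
  exact ⟨⟨ψ, hψH⟩, Metric.mem_ball.2 (by rwa [Subtype.dist_eq]), hb⟩

/-- For meager `C ⊆ [0,1]`, the set of `φ ∈ H⁺` with `φ(C)` free of APs is residual
in `H⁺`: its complement in `H⁺` is meager (in the sup-norm subspace topology). -/
theorem residually_many_FAP_images (C : Set ℝ) (hC : C ⊆ Set.Icc 0 1)
    (hmeager : IsMeagre C) :
    IsMeagre {φ : ↥Hplus | ¬ FAP (imgC φ.1 C)} := by
  obtain ⟨S, hS_nwd, hS_count, hS_cover⟩ :=
    isMeagre_iff_countable_union_isNowhereDense.mp hmeager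
  obtain ⟨F, hF⟩ := (hS_count.insert ∅).exists_eq_range (Set.insert_nonempty _ _)
  have hF_nwd : ∀ n, IsNowhereDense (F n) := by
    intro n
    have hmem : F n ∈ insert ∅ S := by rw [hF]; exact Set.mem_range_self n
    rw [Set.mem_insert_iff] at hmem
    rcases hmem with h | h
    · rw [h]; exact isNowhereDense_empty
    · exact hS_nwd _ h
  have hcover : ∀ x ∈ C, ∃ n, x ∈ F n := by
    intro x hx
    obtain ⟨s0, hs0, hxs⟩ := hS_cover hx
    have hmem : s0 ∈ insert ∅ S := Set.mem_insert_of_mem _ hs0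
    rw [hF] at hmem
    obtain ⟨n, rfl⟩ := hmem
    exact ⟨n, hxs⟩
  set E : ℕ × ℕ × ℕ × ℕ → Set ↥Hplus := fun q =>
    Subtype.val ⁻¹' badSet
      (closure (F q.2.1) ∪ (closure (F q.2.2.1) ∪ closure (F q.2.2.2)))
      (1/((q.1:ℝ)+1)) with hE
  have hEnwd : ∀ q, IsNowhereDense (E q) := by
    intro q
    have hu2 := nwd_union_s8 isClosed_closure ((hF_nwd q.2.2.1).closure)
      isClosed_closure ((hF_nwd q.2.2.2).closure)
    have hu := nwd_union_s8 isClosed_closure ((hF_nwd q.2.1).closure) hu2.1 hu2.2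
    exact badSet_nwd hu.1 hu.2 (by positivity)
  have hsub : {φ : ↥Hplus | ¬ FAP (imgC φ.1 C)} ⊆
      ⋃ n : ℕ, E (Denumerable.ofNat (ℕ × ℕ × ℕ × ℕ) n) := by
    intro φ hφ
    simp only [Set.mem_setOf_eq, FAP, not_not] at hφ
    obtain ⟨x, d, hd, h1, h2, h3⟩ := hφ
    obtain ⟨a, haC, hax⟩ := h1
    obtain ⟨b, hbC, hbx⟩ := h2
    obtain ⟨c, hcC, hcx⟩ := h3
    obtain ⟨i, hi⟩ := hcover a.1 haC
    obtain ⟨j, hj⟩ := hcover b.1 hbC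
    obtain ⟨k, hk⟩ := hcover c.1 hcC
    obtain ⟨n, hn⟩ := exists_nat_one_div_lt hd
    refine Set.mem_iUnion.2 ⟨Encodable.encode ((n, i, j, k) : ℕ × ℕ × ℕ × ℕ), ?_⟩
    rw [hE]
    simp only [Denumerable.ofNat_encode]
    refine ⟨a, b, c, Or.inl (subset_closure hi), Or.inr (Or.inl (subset_closure hj)),
      Or.inr (Or.inr (subset_closure hk)), ?_, ?_⟩
    · rw [hbx, hax]; linarith [hn.le]
    · rw [hax, hbx, hcx]; ring
  exact IsMeagre.mono hsub
    (isMeagre_iUnion (fun n => isMeagre_of_isNowhereDense (hEnwd _)))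
end
end

section
/- Let C ⊆ [0,1] be a nowhere dense subset and ε > 0. Let H_ε(C) = {φ ∈ H⁺ : there are no x ∈ ℝ and d ≥ ε with x, x+d, x+2d ∈ φ(C)}. Then H_ε(C) contains a subset that is dense in H⁺ and open in H⁺; in particular H_ε(C) is residual in H⁺. -/
open Set

noncomputable section

section AuxiliaryLemmas
open Finset
open scoped Classical


/- === piecewise linear machinery (already verified) === -/
def ramp (u v t : ℝ) : ℝ := max 0 (min t v - u)
lemma ramp_mono (u v : ℝ) : Monotone (ramp u v) := fun s t h =>
  max_le_max le_rfl (by gcongr)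
lemma ramp_continuous (u v : ℝ) : Continuous (ramp u v) := by
  unfold ramp; fun_prop
lemma ramp_of_le (u v t : ℝ) (h : t ≤ u) : ramp u v t = 0 := by
  unfold ramp
  rw [max_eq_left]
  have : min t v ≤ u := le_trans (min_le_left _ _) h
  linarith
lemma ramp_of_ge (u v t : ℝ) (huv : u ≤ v) (h : v ≤ t) : ramp u v t = v - u := by
  unfold ramp
  rw [min_eq_right h, max_eq_right (by linarith)]
lemma seqLe {N : ℕ} {a : ℕ → ℝ} (ha : ∀ s < N, a s < a (s+1)) :
    ∀ p q, p ≤ q → q ≤ N → a p ≤ a q := by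
  intro p q hpq hqN
  induction q with
  | zero => have : p = 0 := by omega
            simp [this]
  | succ n ih =>
    rcases Nat.lt_or_ge p (n+1) with h | h
    · exact le_trans (ih (by omega) (by omega)) (le_of_lt (ha n (by omega)))
    · have : p = n + 1 := by omega
      simp [this]
lemma seqLt {N : ℕ} {a : ℕ → ℝ} (ha : ∀ s < N, a s < a (s+1)) :
    ∀ p q, p < q → q ≤ N → a p < a q := by
  intro p q hpq hqN
  calc a p < a (p+1) := ha p (by omega)
  _ ≤ a q := seqLe ha _ _ (by omega) hqN
lemma seqCover {a : ℕ → ℝ} {t : ℝ} :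
    ∀ N, 1 ≤ N → a 0 ≤ t → t ≤ a N → ∃ s < N, a s ≤ t ∧ t ≤ a (s+1) := by
  intro N
  induction N with
  | zero => omega
  | succ N ih =>
    intro _ h0 h1
    rcases Nat.eq_zero_or_pos N with rfl | hN
    · exact ⟨0, by omega, h0, h1⟩
    · rcases le_or_gt t (a N) with h | h
      · obtain ⟨s, hs, hh⟩ := ih hN h0 h
        exact ⟨s, by omega, hh⟩
      · exact ⟨N, by omega, le_of_lt h, h1⟩
def plin (N : ℕ) (a y : ℕ → ℝ) (t : ℝ) : ℝ :=
  y 0 + ∑ s ∈ Finset.range N, ((y (s+1) - y s) / (a (s+1) - a s)) * ramp (a s) (a (s+1)) t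
variable {N : ℕ} {a y : ℕ → ℝ}
lemma plin_continuous (N : ℕ) (a y : ℕ → ℝ) : Continuous (plin N a y) := by
  unfold plin
  refine continuous_const.add (continuous_finset_sum _ fun s _ => ?_)
  exact continuous_const.mul (ramp_continuous _ _)
lemma plin_monotone (ha : ∀ s < N, a s < a (s+1)) (hy : ∀ s < N, y s < y (s+1)) :
    Monotone (plin N a y) := by
  intro t₁ t₂ h
  unfold plin
  gcongr with s hs
  · rw [Finset.mem_range] at hs
    exact div_nonneg (by have := hy s hs; linarith) (by have := ha s hs; linarith)
  · exact ramp_mono _ _ h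
lemma plin_node (ha : ∀ s < N, a s < a (s+1)) (j : ℕ) (hj : j ≤ N) :
    plin N a y (a j) = y j := by
  unfold plin
  have h1 : ∀ s ∈ Finset.range N,
      ((y (s+1) - y s) / (a (s+1) - a s)) * ramp (a s) (a (s+1)) (a j)
        = if s < j then y (s+1) - y s else 0 := by
    intro s hs
    rw [Finset.mem_range] at hs
    by_cases h : s < j
    · rw [if_pos h, ramp_of_ge _ _ _ (le_of_lt (ha s hs)) (seqLe ha (s+1) j h hj)]
      rw [div_mul_eq_mul_div, mul_div_assoc, div_self (by have := ha s hs; linarith), mul_one]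
    · rw [if_neg h, ramp_of_le _ _ _ (seqLe ha j s (not_lt.1 h) (le_of_lt hs)), mul_zero]
  rw [Finset.sum_congr rfl h1]
  have h2 : (∑ x ∈ Finset.range N, if x < j then y (x+1) - y x else 0)
      = ∑ x ∈ Finset.range j, (y (x+1) - y x) := by
    rw [← Finset.sum_filter]
    apply Finset.sum_congr _ (fun _ _ => rfl)
    ext x
    simp only [Finset.mem_filter, Finset.mem_range]
    omega
  rw [h2, Finset.sum_range_sub (f := y)]
  ring
lemma plin_strictMonoOn (ha : ∀ s < N, a s < a (s+1)) (hy : ∀ s < N, y s < y (s+1)) :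
    StrictMonoOn (plin N a y) (Set.Icc (a 0) (a N)) := by
  intro t₁ ht₁ t₂ ht₂ h
  have hcov : ∃ s < N, a s ≤ t₁ ∧ t₁ < a (s+1) := by
    have hN' : t₁ < a N := lt_of_lt_of_le h ht₂.2
    have h0 : a 0 ≤ t₁ := ht₁.1
    clear ht₁ ht₂ hy
    induction N with
    | zero => exact absurd (lt_of_le_of_lt h0 hN') (lt_irrefl _)
    | succ n ih =>
      rcases lt_or_ge t₁ (a n) with h' | h'
      · obtain ⟨s, hs, hh⟩ := ih (fun s hs => ha s (by omega)) h'
        exact ⟨s, by omega, hh⟩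
      · exact ⟨n, by omega, h', hN'⟩
  obtain ⟨s, hsN, hs1, hs2⟩ := hcov
  unfold plin
  have key : ((y (s+1) - y s) / (a (s+1) - a s)) * ramp (a s) (a (s+1)) t₁
      < ((y (s+1) - y s) / (a (s+1) - a s)) * ramp (a s) (a (s+1)) t₂ := by
    have hslope : 0 < (y (s+1) - y s) / (a (s+1) - a s) :=
      div_pos (by have := hy s hsN; linarith) (by have := ha s hsN; linarith)
    have hr1 : ramp (a s) (a (s+1)) t₁ = t₁ - a s := by
      unfold ramp
      rw [min_eq_left (le_of_lt hs2), max_eq_right (by linarith)]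
    have hr2 : t₁ - a s < ramp (a s) (a (s+1)) t₂ := by
      unfold ramp
      rcases le_or_gt (a (s+1)) t₂ with h' | h'
      · rw [min_eq_right h', max_eq_right (by have := ha s hsN; linarith)]; linarith
      · rw [min_eq_left (le_of_lt h'), max_eq_right (by linarith)]; linarith
    rw [hr1]
    exact (mul_lt_mul_iff_right₀ hslope).2 hr2
  have hlt : ∑ i ∈ Finset.range N, ((y (i+1) - y i) / (a (i+1) - a i)) * ramp (a i) (a (i+1)) t₁
      < ∑ i ∈ Finset.range N, ((y (i+1) - y i) / (a (i+1) - a i)) * ramp (a i) (a (i+1)) t₂ := by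
    apply Finset.sum_lt_sum
    · intro i hi
      rw [Finset.mem_range] at hi
      by_cases h' : i = s
      · subst h'; exact le_of_lt key
      · have hslope : 0 ≤ (y (i+1) - y i) / (a (i+1) - a i) :=
          div_nonneg (by have := hy i hi; linarith) (by have := ha i hi; linarith)
        exact mul_le_mul_of_nonneg_left (ramp_mono _ _ (le_of_lt h)) hslope
    · exact ⟨s, Finset.mem_range.2 hsN, key⟩
  linarith

/- === AP-free machinery (already verified) === -/
def APfree (S : Finset ℝ) : Prop := ∀ a ∈ S, ∀ b ∈ S, ∀ c ∈ S, a + c = 2*b → a = c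
lemma APfree_insert {S : Finset ℝ} (hS : APfree S) (v : ℝ)
    (hv : ∀ b ∈ S, ∀ c ∈ S, v ≠ 2*b - c ∧ v ≠ (b+c)/2) : APfree (insert v S) := by
  intro a ha b hb c hc heq
  rw [Finset.mem_insert] at ha hb hc
  rcases ha with rfl | ha
  · rcases hc with rfl | hc
    · rfl
    · rcases hb with rfl | hb
      · exfalso; exact (hv c hc c hc).1 (by linarith)
      · exfalso; exact (hv b hb c hc).1 (by linarith)
  · rcases hc with rfl | hc
    · rcases hb with rfl | hb
      · exfalso; exact (hv a ha a ha).1 (by linarith)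
      · exfalso; exact (hv b hb a ha).1 (by linarith)
    · rcases hb with rfl | hb
      · exfalso; exact (hv a ha c hc).2 (by linarith)
      · exact hS a ha b hb c hc heq
lemma exists_APfree_extension (m : ℕ) (L R : ℕ → ℝ) (S : Finset ℝ) (hS : APfree S)
    (hLR : ∀ i < m, L i < R i) :
    ∃ d : ℕ → ℝ, (∀ i < m, d i ∈ Set.Ioo (L i) (R i)) ∧
      APfree (S ∪ (Finset.range m).image d) := by
  induction m with
  | zero => exact ⟨fun _ => 0, fun i hi => absurd hi (by omega), by simpa using hS⟩
  | succ m ih =>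
    obtain ⟨d, hd, hAP⟩ := ih (fun i hi => hLR i (by omega))
    set T : Finset ℝ := S ∪ (Finset.range m).image d with hT
    set B : Finset ℝ := (T ×ˢ T).image (fun p => 2*p.1 - p.2) ∪
      (T ×ˢ T).image (fun p => (p.1 + p.2)/2) with hB
    have : ((Set.Ioo (L m) (R m)) \ (B : Set ℝ)).Nonempty := by
      apply Set.Infinite.nonempty
      exact ((Set.Ioo_infinite (hLR m (by omega)))).diff (B.finite_toSet)
    obtain ⟨v, hv1, hv2⟩ := this
    refine ⟨Function.update d m v, ?_, ?_⟩
    · intro i hi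
      rcases Nat.lt_or_ge i m with h | h
      · rw [Function.update_of_ne (by omega)]; exact hd i h
      · have : i = m := by omega
        subst this
        rw [Function.update_self]; exact hv1
    · have himg : (Finset.range (m+1)).image (Function.update d m v)
          = insert v ((Finset.range m).image d) := by
        rw [Finset.range_add_one, Finset.image_insert, Function.update_self]
        congr 1
        apply Finset.image_congr
        intro x hx
        rw [Finset.mem_coe, Finset.mem_range] at hx
        rw [Function.update_of_ne (by omega)]
      rw [himg, Finset.union_comm S, Finset.insert_union, Finset.union_comm, ← hT]
      apply APfree_insert hAP
      intro b hb c hc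
      constructor
      · intro h
        apply hv2
        rw [hB]
        simp only [Finset.coe_union, Set.mem_union, Finset.coe_image, Set.mem_image]
        left
        exact ⟨(b, c), by simpa using ⟨hb, hc⟩, h.symm⟩
      · intro h
        apply hv2
        rw [hB]
        simp only [Finset.coe_union, Set.mem_union, Finset.coe_image, Set.mem_image]
        right
        exact ⟨(b, c), by simpa using ⟨hb, hc⟩, h.symm⟩
lemma APfree_margin {S : Finset ℝ} (hS : APfree S) :
    ∃ μ > 0, ∀ a ∈ S, ∀ b ∈ S, ∀ c ∈ S, a ≠ c → μ ≤ |a + c - 2*b| := by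
  set V : Finset ℝ := ((S ×ˢ S ×ˢ S).filter (fun p => p.1 ≠ p.2.2)).image
    (fun p => |p.1 + p.2.2 - 2*p.2.1|) with hV
  rcases V.eq_empty_or_nonempty with h | h
  · refine ⟨1, one_pos, fun a ha b hb c hc hac => ?_⟩
    exfalso
    have hmem : |a + c - 2*b| ∈ V :=
      Finset.mem_image.2 ⟨(a, b, c), Finset.mem_filter.2 ⟨by simp [ha, hb, hc], hac⟩, rfl⟩
    rw [h] at hmem
    exact Finset.notMem_empty _ hmem
  · refine ⟨V.min' h, ?_, ?_⟩
    · obtain ⟨p, hp, hval⟩ := Finset.mem_image.1 (V.min'_mem h)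
      rw [Finset.mem_filter] at hp
      obtain ⟨hmem, hne⟩ := hp
      simp only [Finset.mem_product] at hmem
      rw [gt_iff_lt, ← hval, abs_pos]
      intro h0
      exact hne (hS _ hmem.1 _ hmem.2.1 _ hmem.2.2 (by linarith))
    · intro a ha b hb c hc hac
      apply Finset.min'_le
      exact Finset.mem_image.2 ⟨(a, b, c), Finset.mem_filter.2 ⟨by simp [ha, hb, hc], hac⟩, rfl⟩


lemma open_step (K : Set ℝ) (hK : IsClosed K) (ε : ℝ) :
    IsOpen {φ : ↥Hplus | ¬ ∃ x d : ℝ, ε ≤ d ∧ x ∈ imgC φ.1 K ∧ x + d ∈ imgC φ.1 K ∧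
      x + 2*d ∈ imgC φ.1 K} := by
  rw [Metric.isOpen_iff]
  intro φ hφ
  set A : Set ℝ := imgC φ.1 K with hA
  have hKc : IsCompact (Subtype.val ⁻¹' K : Set (Set.Icc (0:ℝ) 1)) :=
    (hK.preimage continuous_subtype_val).isCompact
  have hAc : IsCompact A := hKc.image φ.1.continuous
  set Z : Set (ℝ × ℝ × ℝ) := {p | ε ≤ p.2.1 - p.1 ∧ p.1 + p.2.2 = 2 * p.2.1} with hZ
  have hZc : IsClosed Z := by
    apply IsClosed.inter
    · exact isClosed_le continuous_const (continuous_snd.fst.sub continuous_fst)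
    · exact isClosed_eq (continuous_fst.add continuous_snd.snd)
        (continuous_const.mul continuous_snd.fst)
  have hsub : A ×ˢ (A ×ˢ A) ⊆ Zᶜ := by
    rintro ⟨a, b, c⟩ ⟨ha, hb, hc⟩ ⟨h1, h2⟩
    exact hφ ⟨a, b - a, by simpa using h1, ha, by simpa using hb, by
      have : a + 2 * (b - a) = c := by linarith
      rw [this]; exact hc⟩
  obtain ⟨θ, hθ, hthick⟩ := ((hAc.prod (hAc.prod hAc)).exists_thickening_subset_open
    hZc.isOpen_compl hsub)
  refine ⟨θ/2, by linarith, ?_⟩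
  intro ψ hψ
  rw [Metric.mem_ball] at hψ
  rintro ⟨x, d, hd, ⟨s, hs, hsx⟩, ⟨t, ht, htx⟩, ⟨u, hu, hux⟩⟩
  have hz : (x, x + d, x + 2*d) ∈ Z := ⟨by simpa using hd, by ring⟩
  have hp : ((φ.1 s : ℝ), ((φ.1 t : ℝ), (φ.1 u : ℝ))) ∈ A ×ˢ (A ×ˢ A) :=
    ⟨⟨s, hs, rfl⟩, ⟨t, ht, rfl⟩, ⟨u, hu, rfl⟩⟩
  have hdistc : ∀ v : Set.Icc (0:ℝ) 1, dist (ψ.1 v) (φ.1 v) < θ/2 := by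
    intro v
    calc dist (ψ.1 v) (φ.1 v) ≤ dist ψ.1 φ.1 := ContinuousMap.dist_apply_le_dist v
    _ < θ/2 := by rwa [Subtype.dist_eq] at hψ
  have hdist : dist (x, x + d, x + 2*d) ((φ.1 s : ℝ), ((φ.1 t : ℝ), (φ.1 u : ℝ))) < θ := by
    rw [Prod.dist_eq, Prod.dist_eq, ← hux, ← htx, ← hsx]
    have h1 := hdistc s
    have h2 := hdistc t
    have h3 := hdistc u
    have hhalf : θ/2 < θ := by linarith
    exact max_lt (h1.trans hhalf) (max_lt (h2.trans hhalf) (h3.trans hhalf))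
  have : (x, x + d, x + 2*d) ∈ Metric.thickening θ (A ×ˢ (A ×ˢ A)) :=
    Metric.mem_thickening_iff.2 ⟨_, hp, hdist⟩
  exact hthick this hz

/- === density === -/
set_option maxHeartbeats 2000000 in
lemma density_step (K : Set ℝ) (hK : IsClosed K) (hKsub : K ⊆ Set.Icc 0 1)
    (hKnd : interior K = ∅) (ε : ℝ) (hε : 0 < ε) (φ₀ : ↥Hplus) (r : ℝ) (hr : 0 < r) :
    ∃ φ : ↥Hplus, dist φ φ₀ < r ∧
      ¬ ∃ x d : ℝ, ε ≤ d ∧ x ∈ imgC φ.1 K ∧ x + d ∈ imgC φ.1 K ∧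
        x + 2*d ∈ imgC φ.1 K := by
  obtain ⟨hφsm, hφ0, hφ1⟩ := φ₀.2
  -- the clamped version of φ₀ as a map ℝ → ℝ
  set F : ℝ → ℝ := fun x => φ₀.1 (Set.projIcc 0 1 zero_le_one x) with hF
  have hFval : ∀ x (hx : x ∈ Set.Icc (0:ℝ) 1), F x = φ₀.1 ⟨x, hx⟩ := by
    intro x hx
    rw [hF]
    simp only
    rw [Set.projIcc_of_mem]
  have hF0 : F 0 = 0 := by rw [hFval 0 (by norm_num)]; exact hφ0
  have hF1 : F 1 = 1 := by rw [hFval 1 (by norm_num)]; exact hφ1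
  have hFsm : ∀ x y (hx : x ∈ Set.Icc (0:ℝ) 1) (hy : y ∈ Set.Icc (0:ℝ) 1),
      x < y → F x < F y := by
    intro x y hx hy hxy
    rw [hFval x hx, hFval y hy]
    exact hφsm (by exact_mod_cast hxy)
  have hFle : ∀ x y (hx : x ∈ Set.Icc (0:ℝ) 1) (hy : y ∈ Set.Icc (0:ℝ) 1),
      x ≤ y → F x ≤ F y := by
    intro x y hx hy hxy
    rcases eq_or_lt_of_le hxy with rfl | h
    · exact le_rfl
    · exact le_of_lt (hFsm x y hx hy h)
  -- uniform continuity
  have huc := CompactSpace.uniformContinuous_of_continuous φ₀.1.continuous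
  rw [Metric.uniformContinuous_iff] at huc
  obtain ⟨η₀, hη₀, hucη⟩ := huc (r/8) (by linarith)
  set η : ℝ := η₀/2 with hη_def
  have hηpos : 0 < η := by positivity
  have hFuc : ∀ x y, x ∈ Set.Icc (0:ℝ) 1 → y ∈ Set.Icc (0:ℝ) 1 → |x - y| ≤ η →
      |F x - F y| < r/8 := by
    intro x y hx hy hxy
    have : dist (⟨x, hx⟩ : Set.Icc (0:ℝ) 1) ⟨y, hy⟩ < η₀ := by
      rw [Subtype.dist_eq, Real.dist_eq]
      simp only
      linarith
    have h2 := hucη this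
    rw [Real.dist_eq] at h2
    rw [hFval x hx, hFval y hy]
    exact h2
  -- choose n
  obtain ⟨n, hn⟩ := exists_nat_gt (max (4/η) 2)
  have hn2 : (2:ℝ) < n := lt_of_le_of_lt (le_max_right _ _) hn
  have hn4 : 4/η < n := lt_of_le_of_lt (le_max_left _ _) hn
  have hn3 : 3 ≤ n := by
    have : (2:ℕ) < n := by exact_mod_cast hn2
    omega
  have hn0 : (0:ℝ) < n := by linarith
  set b : ℝ := 1/(8*n) with hb_def
  have hb : 0 < b := by positivity
  have h8 : 8*b = 1/n := by rw [hb_def]; field_simp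
  have hinv : 1/(n:ℝ) < η/4 := by
    rw [div_lt_div_iff₀ hn0 (by norm_num)]
    have := (div_lt_iff₀ hηpos).1 hn4
    linarith
  have hbη : 12*b ≤ η := by linarith
  -- choose the grid points W and radii P
  have hdense : Dense Kᶜ := interior_eq_empty_iff_dense_compl.mp hKnd
  have hWex : ∀ j : ℕ, ∃ wρ : ℝ × ℝ, (1 ≤ j ∧ j < n) →
      (|wρ.1 - j/n| ≤ 2*b ∧ 0 < wρ.2 ∧ wρ.2 ≤ b ∧
        ∀ z ∈ Set.Icc (wρ.1 - wρ.2) (wρ.1 + wρ.2), z ∉ K) := by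
    intro j
    by_cases hj : 1 ≤ j ∧ j < n
    · have hne : (Set.Ioo ((j:ℝ)/n - 2*b) ((j:ℝ)/n + 2*b)).Nonempty :=
        ⟨(j:ℝ)/n, by constructor <;> linarith⟩
      obtain ⟨w, hw2, hw1⟩ := hdense.exists_mem_open isOpen_Ioo hne
      obtain ⟨ρ₀, hρ₀, hball⟩ := Metric.isOpen_iff.1 hK.isOpen_compl w hw2
      obtain ⟨hwl, hwr⟩ := hw1
      refine ⟨(w, min (ρ₀/2) b), fun _ => ⟨?_, ?_, ?_, ?_⟩⟩
      · rw [abs_le]; constructor <;> simp only <;> linarith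
      · exact lt_min (by linarith) hb
      · exact min_le_right _ _
      · intro z hz
        obtain ⟨hz1, hz2⟩ := hz
        have hm : min (ρ₀/2) b ≤ ρ₀/2 := min_le_left _ _
        have : z ∈ Metric.ball w ρ₀ := by
          rw [Metric.mem_ball, Real.dist_eq, abs_lt]
          simp only at hz1 hz2
          constructor <;> linarith
        exact hball this
    · exact ⟨(0,0), fun h => absurd h hj⟩
  choose WP hWP using hWex
  set W : ℕ → ℝ := fun j => if j = 0 then 0 else if n ≤ j then 1 else (WP j).1 with hW_def
  set P : ℕ → ℝ := fun j => if j = 0 ∨ n ≤ j then 0 else (WP j).2 with hP_def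
  have hW0 : W 0 = 0 := by simp [hW_def]
  have hWn : W n = 1 := by
    have h1 : ¬(n = 0) := by omega
    simp only [hW_def, h1, if_false, le_refl, if_true]
  have hP0 : P 0 = 0 := by simp [hP_def]
  have hPn : P n = 0 := by simp [hP_def]
  have hPpos : ∀ j, 1 ≤ j → j < n → 0 < P j := by
    intro j h1 h2
    have hc : ¬(j = 0 ∨ n ≤ j) := by omega
    simp only [hP_def, hc, if_false]
    exact (hWP j ⟨h1, h2⟩).2.1
  have hPb : ∀ j, 0 ≤ P j ∧ P j ≤ b := by
    intro j
    simp only [hP_def]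
    by_cases h : j = 0 ∨ n ≤ j
    · rw [if_pos h]; exact ⟨le_rfl, le_of_lt hb⟩
    · rw [if_neg h]
      have := hWP j ⟨by omega, by omega⟩
      exact ⟨le_of_lt this.2.1, this.2.2.1⟩
  have hPK : ∀ j, 1 ≤ j → j < n → ∀ z ∈ Set.Icc (W j - P j) (W j + P j), z ∉ K := by
    intro j h1 h2
    have hc : ¬(j = 0 ∨ n ≤ j) := by omega
    have hc1 : ¬(j = 0) := by omega
    have hc2 : ¬(n ≤ j) := by omega
    simp only [hW_def, hP_def, hc, hc1, hc2, if_false]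
    exact (hWP j ⟨h1, h2⟩).2.2.2
  have hWdist : ∀ j, j ≤ n → |W j - j/n| ≤ 2*b := by
    intro j hj
    by_cases h0 : j = 0
    · subst h0
      rw [hW0]
      norm_num
      linarith
    · by_cases h1 : j = n
      · subst h1
        rw [hWn, div_self (ne_of_gt hn0)]
        norm_num
        linarith
      · have hc2 : ¬(n ≤ j) := by omega
        simp only [hW_def, h0, hc2, if_false]
        exact (hWP j ⟨by omega, by omega⟩).1
  have hgapLB : ∀ j, j < n → 4*b ≤ W (j+1) - W j := by
    intro j hj
    have h1 := abs_le.1 (hWdist j (by omega))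
    have h2 := abs_le.1 (hWdist (j+1) (by omega))
    have hcast : ((j+1:ℕ):ℝ)/n = (j:ℝ)/n + 8*b := by
      push_cast
      rw [add_div, ← h8]
    rw [hcast] at h2
    obtain ⟨a1, a2⟩ := h1
    obtain ⟨b1, b2⟩ := h2
    linarith
  have hgapUB : ∀ j, j < n → W (j+1) - W j ≤ 12*b := by
    intro j hj
    have h1 := abs_le.1 (hWdist j (by omega))
    have h2 := abs_le.1 (hWdist (j+1) (by omega))
    have hcast : ((j+1:ℕ):ℝ)/n = (j:ℝ)/n + 8*b := by
      push_cast
      rw [add_div, ← h8]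
    rw [hcast] at h2
    obtain ⟨a1, a2⟩ := h1
    obtain ⟨b1, b2⟩ := h2
    linarith
  have hWlt : ∀ j, j < n → W j < W (j+1) := fun j hj => by
    have := hgapLB j hj; linarith
  have hWmem : ∀ j, j ≤ n → W j ∈ Set.Icc (0:ℝ) 1 := by
    intro j hj
    constructor
    · calc (0:ℝ) = W 0 := hW0.symm
      _ ≤ W j := seqLe (N := n) hWlt 0 j (by omega) hj
    · calc W j ≤ W n := seqLe (N := n) hWlt j n hj le_rfl
      _ = 1 := hWn
  -- the φ₀-images of the grid
  set q : ℕ → ℝ := fun j => F (W j) with hq_def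
  have hq0 : q 0 = 0 := by simp only [hq_def]; rw [hW0, hF0]
  have hqn : q n = 1 := by simp only [hq_def]; rw [hWn, hF1]
  have hqlt : ∀ j, j < n → q j < q (j+1) := fun j hj =>
    hFsm _ _ (hWmem j (by omega)) (hWmem (j+1) (by omega)) (hWlt j hj)
  -- the AP-free selection
  have hSfree : APfree ({0, 1} : Finset ℝ) := by
    intro a ha B hb c hc h
    simp only [Finset.mem_insert, Finset.mem_singleton] at ha hb hc
    rcases ha with rfl | rfl <;> rcases hb with rfl | rfl <;> rcases hc with rfl | rfl <;>
      first | rfl | linarith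
  obtain ⟨d, hd, hAP⟩ := exists_APfree_extension n (fun j => q j)
    (fun j => min (q j + r/8) (q (j+1))) ({0, 1} : Finset ℝ) hSfree
    (fun i hi => lt_min (by linarith) (hqlt i hi))
  obtain ⟨μ, hμ, hmargin⟩ := APfree_margin hAP
  have hdm : ∀ i, i < n → q i < d i ∧ d i < q i + r/8 ∧ d i < q (i+1) := by
    intro i hi
    obtain ⟨h1, h2⟩ := hd i hi
    exact ⟨h1, (lt_min_iff.1 h2).1, (lt_min_iff.1 h2).2⟩
  -- representatives
  set rep : ℕ → ℝ := fun j => if j = 0 then 0 else if j = n-1 then 1 else d j with hrep_def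
  have hrepT : ∀ j, j < n →
      rep j ∈ ({0, 1} : Finset ℝ) ∪ (Finset.range n).image d := by
    intro j hj
    simp only [hrep_def]
    split_ifs
    · exact Finset.mem_union_left _ (by simp)
    · exact Finset.mem_union_left _ (by simp)
    · exact Finset.mem_union_right _ (Finset.mem_image.2 ⟨j, Finset.mem_range.2 hj, rfl⟩)
  have hrepgap : ∀ j, j < n-1 → 0 < rep (j+1) - rep j := by
    intro j hj
    rcases Nat.eq_zero_or_pos j with rfl | hjpos
    · have hc1 : ¬(0+1 = 0) := by omega
      have hc2 : ¬(0+1 = n-1) := by omega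
      simp only [hrep_def, hc1, hc2, if_false, eq_self_iff_true, if_true]
      have h1 := (hdm 1 (by omega)).1
      have h2 := hqlt 0 (by omega)
      rw [hq0] at h2
      norm_num at h1 ⊢
      linarith
    · have hc1 : ¬(j = 0) := by omega
      have hc2 : ¬(j = n-1) := by omega
      have hc3 : ¬(j+1 = 0) := by omega
      by_cases hjn : j+1 = n-1
      · have hn1 : ¬(n-1 = 0) := by omega
        simp only [hrep_def, hc1, hc2, hc3, hjn, hn1, if_false, eq_self_iff_true, if_true]
        have h1 := (hdm j (by omega)).2.2
        rw [hjn] at h1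
        have h2 := hqlt (n-1) (by omega)
        rw [show n-1+1 = n by omega, hqn] at h2
        linarith
      · simp only [hrep_def, hc1, hc2, hc3, hjn, if_false]
        have h1 := (hdm j (by omega)).2.2
        have h2 := (hdm (j+1) (by omega)).1
        linarith
  have hGne : ((Finset.range (n-1)).image (fun j => rep (j+1) - rep j)).Nonempty :=
    (Finset.nonempty_range_iff.2 (by omega)).image _
  set G : ℝ := ((Finset.range (n-1)).image (fun j => rep (j+1) - rep j)).min' hGne with hG_def
  have hGpos : 0 < G := by
    obtain ⟨j, hj, hval⟩ := Finset.mem_image.1 (Finset.min'_mem _ hGne)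
    rw [hG_def, ← hval]
    exact hrepgap j (Finset.mem_range.1 hj)
  have hGle : ∀ j, j < n-1 → G ≤ rep (j+1) - rep j := fun j hj =>
    Finset.min'_le _ _ (Finset.mem_image.2 ⟨j, Finset.mem_range.2 hj, rfl⟩)
  -- the small parameter
  set lam : ℝ := min (min (μ/7) (ε/2)) (min (r/100) (G/3)) with hlam_def
  have hlam : 0 < lam :=
    lt_min (lt_min (by linarith) (by linarith)) (lt_min (by linarith) (by linarith))
  have hlamμ : 7*lam ≤ μ := by
    have : lam ≤ μ/7 := le_trans (min_le_left _ _) (min_le_left _ _)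
    linarith
  have hlamε : 2*lam ≤ ε := by
    have : lam ≤ ε/2 := le_trans (min_le_left _ _) (min_le_right _ _)
    linarith
  have hlamr : 100*lam ≤ r := by
    have : lam ≤ r/100 := le_trans (min_le_right _ _) (min_le_left _ _)
    linarith
  have hlamG : 3*lam ≤ G := by
    have : lam ≤ G/3 := le_trans (min_le_right _ _) (min_le_right _ _)
    linarith
  -- the target values
  set c : ℕ → ℝ := fun j => if j = 0 then 0 else if j = n-1 then 1 - lam else d j with hc_def
  have hc0 : c 0 = 0 := by simp [hc_def]
  have hcend : c (n-1) = 1 - lam := by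
    have hc1 : ¬(n-1 = 0) := by omega
    simp only [hc_def, hc1, if_false, eq_self_iff_true, if_true]
  have hceqrep : ∀ j, j < n-1 → c j = rep j := by
    intro j hj
    simp only [hc_def, hrep_def]
    split_ifs with h1 h2
    · rfl
    · omega
    · rfl
  have hcge : ∀ j, j < n → rep j - lam ≤ c j := by
    intro j hj
    by_cases hjn : j = n-1
    · subst hjn
      rw [hcend]
      have hc1 : ¬(n-1 = 0) := by omega
      simp only [hrep_def, hc1, if_false, eq_self_iff_true, if_true]
      exact le_rfl
    · rw [hceqrep j (by omega)]
      linarith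
  have hcrep : ∀ j, j < n → |c j - rep j| ≤ lam := by
    intro j hj
    by_cases hjn : j = n-1
    · subst hjn
      rw [hcend]
      have hc1 : ¬(n-1 = 0) := by omega
      simp only [hrep_def, hc1, if_false, eq_self_iff_true, if_true]
      rw [show (1 - lam - 1) = -lam by ring, abs_neg, abs_of_pos hlam]
    · rw [hceqrep j (by omega)]
      simp [abs_of_nonneg, le_of_lt hlam]
  have hclt : ∀ j, j < n-1 → c j + lam < c (j+1) := by
    intro j hj
    have e1 : c j = rep j := hceqrep j hj
    have e2 : rep (j+1) - lam ≤ c (j+1) := hcge (j+1) (by omega)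
    have e3 := hGle j hj
    linarith
  have hclt' : ∀ j, j < n-1 → c j < c (j+1) := fun j hj => by
    have := hclt j hj; linarith
  have hcsep : ∀ p Q, p < Q → Q ≤ n-1 → c p + lam < c Q := by
    intro p Q hpq hQ
    calc c p + lam < c (p+1) := hclt p (by omega)
    _ ≤ c Q := seqLe (N := n-1) hclt' (p+1) Q (by omega) hQ
  have hcq : ∀ j, j < n → |c j - q j| ≤ r/8 + lam := by
    intro j hj
    by_cases h0 : j = 0
    · subst h0
      rw [hc0, hq0]
      norm_num
      linarith
    · by_cases hN : j = n-1
      · subst hN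
        rw [hcend]
        have h1 : |1 - q (n-1)| < r/8 := by
          have hmem := hWmem (n-1) (by omega)
          have huc2 := hFuc 1 (W (n-1)) (by norm_num) hmem ?_
          · rw [hF1] at huc2
            exact huc2
          · have hg := hgapUB (n-1) (by omega)
            rw [show n-1+1 = n by omega, hWn] at hg
            have := hWlt (n-1) (by omega)
            rw [show n-1+1 = n by omega, hWn] at this
            rw [abs_le]
            constructor <;> linarith
        have h2 : |1 - lam - q (n-1)| ≤ |1 - q (n-1)| + |(-lam)| := by
          rw [show 1 - lam - q (n-1) = (1 - q (n-1)) + (-lam) by ring]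
          exact abs_add_le _ _
        rw [abs_neg, abs_of_pos hlam] at h2
        linarith
      · simp only [hc_def, h0, hN, if_false]
        have h1 := (hdm j hj).1
        have h2 := (hdm j hj).2.1
        rw [abs_le]
        constructor <;> linarith
  -- the node sequences
  set A : ℕ → ℝ := fun s => if s % 2 = 0 then W (s/2) + P (s/2)
    else W ((s+1)/2) - P ((s+1)/2) with hA_def
  set Y : ℕ → ℝ := fun s => if s % 2 = 0 then c (s/2) else c (s/2) + lam with hY_def
  have hAE : ∀ j, A (2*j) = W j + P j := by
    intro j
    have e1 : 2*j % 2 = 0 := by omega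
    have e2 : 2*j/2 = j := by omega
    simp only [hA_def, e1, eq_self_iff_true, if_true, e2]
  have hAO : ∀ j, A (2*j+1) = W (j+1) - P (j+1) := by
    intro j
    have e1 : ¬((2*j+1) % 2 = 0) := by omega
    have e2 : (2*j+1+1)/2 = j+1 := by omega
    simp only [hA_def, e1, if_false, e2]
  have hYE : ∀ j, Y (2*j) = c j := by
    intro j
    have e1 : 2*j % 2 = 0 := by omega
    have e2 : 2*j/2 = j := by omega
    simp only [hY_def, e1, eq_self_iff_true, if_true, e2]
  have hYO : ∀ j, Y (2*j+1) = c j + lam := by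
    intro j
    have e1 : ¬((2*j+1) % 2 = 0) := by omega
    have e2 : (2*j+1)/2 = j := by omega
    simp only [hY_def, e1, if_false, e2]
  have hA0 : A 0 = 0 := by
    have h := hAE 0
    norm_num at h
    rw [h, hW0, hP0]
    ring
  have hAN : A (2*n-1) = 1 := by
    have h := hAO (n-1)
    rw [show 2*(n-1)+1 = 2*n-1 by omega, show n-1+1 = n by omega] at h
    rw [h, hWn, hPn]
    ring
  have hY0 : Y 0 = 0 := by
    have h := hYE 0
    norm_num at h
    rw [h, hc0]
  have hYN : Y (2*n-1) = 1 := by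
    have h := hYO (n-1)
    rw [show 2*(n-1)+1 = 2*n-1 by omega] at h
    rw [h, hcend]
    ring
  have hAinc : ∀ s, s < 2*n-1 → A s < A (s+1) := by
    intro s hs
    rcases Nat.even_or_odd s with ⟨j, hj⟩ | ⟨j, hj⟩
    · have hj' : s = 2*j := by omega
      subst hj'
      rw [hAE j, hAO j]
      have g := hgapLB j (by omega)
      have p1 := (hPb j).2
      have p2 := (hPb (j+1)).2
      linarith
    · have hj' : s = 2*j+1 := by omega
      subst hj'
      rw [hAO j, show 2*j+1+1 = 2*(j+1) by ring, hAE (j+1)]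
      have := hPpos (j+1) (by omega) (by omega)
      linarith
  have hYinc : ∀ s, s < 2*n-1 → Y s < Y (s+1) := by
    intro s hs
    rcases Nat.even_or_odd s with ⟨j, hj⟩ | ⟨j, hj⟩
    · have hj' : s = 2*j := by omega
      subst hj'
      rw [hYE j, hYO j]
      linarith
    · have hj' : s = 2*j+1 := by omega
      subst hj'
      rw [hYO j, show 2*j+1+1 = 2*(j+1) by ring, hYE (j+1)]
      exact hclt j (by omega)
  -- the approximating homeomorphism
  set g : ℝ → ℝ := plin (2*n-1) A Y with hg_def
  have hgmono : Monotone g := plin_monotone hAinc hYinc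
  have hgnode : ∀ j, j ≤ 2*n-1 → g (A j) = Y j := fun j hj => plin_node hAinc j hj
  have hgsm : StrictMonoOn g (Set.Icc (0:ℝ) 1) := by
    have h := plin_strictMonoOn hAinc hYinc
    rwa [hA0, hAN] at h
  have hg0 : g 0 = 0 := by
    have h := hgnode 0 (by omega)
    rwa [hA0, hY0] at h
  have hg1 : g 1 = 1 := by
    have h := hgnode (2*n-1) le_rfl
    rwa [hAN, hYN] at h
  set φc : C(Set.Icc (0:ℝ) 1, ℝ) :=
    ⟨fun t => g t.1, (plin_continuous _ _ _).comp continuous_subtype_val⟩ with hφc_def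
  have hφH : φc ∈ Hplus := by
    refine ⟨fun s t hst => hgsm s.2 t.2 (Subtype.coe_lt_coe.2 hst), hg0, hg1⟩
  have hAmem : ∀ s, s ≤ 2*n-1 → A s ∈ Set.Icc (0:ℝ) 1 := by
    intro s hs
    constructor
    · calc (0:ℝ) = A 0 := hA0.symm
      _ ≤ A s := seqLe (N := 2*n-1) hAinc 0 s (by omega) hs
    · calc A s ≤ A (2*n-1) := seqLe (N := 2*n-1) hAinc s (2*n-1) hs le_rfl
      _ = 1 := hAN
  have hAgap : ∀ s, s < 2*n-1 → A (s+1) - A s ≤ 12*b := by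
    intro s hs
    rcases Nat.even_or_odd s with ⟨j, hj⟩ | ⟨j, hj⟩
    · have hj' : s = 2*j := by omega
      subst hj'
      rw [hAE j, hAO j]
      have g1 := hgapUB j (by omega)
      have p1 := (hPb j).1
      have p2 := (hPb (j+1)).1
      linarith
    · have hj' : s = 2*j+1 := by omega
      subst hj'
      rw [hAO j, show 2*j+1+1 = 2*(j+1) by ring, hAE (j+1)]
      have p2 := (hPb (j+1)).2
      linarith
  -- node-wise closeness
  have hnode : ∀ s, s ≤ 2*n-1 → |Y s - F (A s)| ≤ r/4 + 2*lam := by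
    intro s hs
    rcases Nat.even_or_odd s with ⟨j, hj⟩ | ⟨j, hj⟩
    · have hj' : s = 2*j := by omega
      subst hj'
      rw [hYE j, hAE j]
      have hjn : j < n := by omega
      have h1 := abs_le.1 (hcq j hjn)
      have hWj := hWmem j (by omega)
      have hWj1 : W j + P j ∈ Set.Icc (0:ℝ) 1 := by
        have p1 := (hPb j).1
        have p2 := (hPb j).2
        have gg := hgapLB j hjn
        have wub := (hWmem (j+1) (by omega)).2
        constructor
        · have := hWj.1; linarith
        · linarith
      have h2 : |F (W j) - F (W j + P j)| < r/8 := by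
        apply hFuc _ _ hWj hWj1
        rw [show W j - (W j + P j) = -(P j) by ring, abs_neg,
          abs_of_nonneg (hPb j).1]
        linarith [(hPb j).2]
      have h2' := abs_le.1 h2.le
      have e : q j = F (W j) := rfl
      rw [abs_le]
      constructor <;> linarith [h1.1, h1.2, h2'.1, h2'.2, e.le, e.ge]
    · have hj' : s = 2*j+1 := by omega
      subst hj'
      rw [hYO j, hAO j]
      have hjn : j < n := by omega
      have hjn1 : j + 1 ≤ n := by omega
      have h1 := abs_le.1 (hcq j hjn)
      have hWj := hWmem j (by omega)
      have hWj1 : W (j+1) - P (j+1) ∈ Set.Icc (0:ℝ) 1 := by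
        have p1 := (hPb (j+1)).1
        have p2 := (hPb (j+1)).2
        have gg := hgapLB j hjn
        have wub := (hWmem (j+1) hjn1).2
        constructor
        · have := hWj.1; linarith
        · linarith
      have h2 : |F (W j) - F (W (j+1) - P (j+1))| < r/8 := by
        apply hFuc _ _ hWj hWj1
        have gg := hgapLB j hjn
        have gu := hgapUB j hjn
        have p1 := (hPb (j+1)).1
        have p2 := (hPb (j+1)).2
        rw [abs_le]
        constructor <;> linarith
      have h2' := abs_le.1 h2.le
      have e : q j = F (W j) := rfl
      rw [abs_le]
      constructor <;> linarith [h1.1, h1.2, h2'.1, h2'.2, e.le, e.ge]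
  refine ⟨⟨φc, hφH⟩, ?_, ?_⟩
  · -- closeness
    rw [Subtype.dist_eq, ContinuousMap.dist_lt_iff hr]
    intro t
    show dist (g t.1) ((φ₀ : C(Set.Icc (0:ℝ) 1, ℝ)) t) < r
    have hFt : (φ₀ : C(Set.Icc (0:ℝ) 1, ℝ)) t = F t.1 := (hFval t.1 t.2).symm
    rw [Real.dist_eq, hFt]
    obtain ⟨s, hsN, hs1, hs2⟩ := seqCover (a := A) (t := (t.1:ℝ)) (2*n-1) (by omega)
      (by rw [hA0]; exact t.2.1) (by rw [hAN]; exact t.2.2)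
    have hg1' : Y s ≤ g t.1 := by
      rw [← hgnode s (by omega)]; exact hgmono hs1
    have hg2' : g t.1 ≤ Y (s+1) := by
      rw [← hgnode (s+1) (by omega)]; exact hgmono hs2
    have hmem1 := hAmem s (by omega)
    have hmem2 := hAmem (s+1) (by omega)
    have hF1' : F (A s) ≤ F t.1 := hFle _ _ hmem1 t.2 hs1
    have hF2' : F t.1 ≤ F (A (s+1)) := hFle _ _ t.2 hmem2 hs2
    have hFgap : F (A (s+1)) - F (A s) < r/8 := by
      have h := hFuc (A (s+1)) (A s) hmem2 hmem1 (by
        have h1 := hAinc s hsN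
        have h2 := hAgap s hsN
        rw [abs_le]
        constructor <;> linarith)
      calc F (A (s+1)) - F (A s) ≤ |F (A (s+1)) - F (A s)| := le_abs_self _
      _ < r/8 := h
    have hn1 := abs_le.1 (hnode s (by omega))
    have hn2 := abs_le.1 (hnode (s+1) (by omega))
    rw [abs_lt]
    constructor <;> linarith [hn1.1, hn1.2, hn2.1, hn2.2]
  · -- no arithmetic progression with gap ≥ ε in the image of K
    rintro ⟨x, dd, hdd, hx1, hx2, hx3⟩
    have himg : ∀ z ∈ imgC φc K, ∃ j, j < n ∧ c j ≤ z ∧ z ≤ c j + lam := by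
      rintro z ⟨⟨w, hwI⟩, hwK, rfl⟩
      rw [Set.mem_preimage] at hwK
      obtain ⟨j, hjn, hj1, hj2⟩ := seqCover (a := W) (t := w) n (by omega)
        (by rw [hW0]; exact hwI.1) (by rw [hWn]; exact hwI.2)
      have hzl : W j + P j ≤ w := by
        by_cases h0 : j = 0
        · subst h0
          rw [hW0, hP0]
          have := hwI.1
          linarith
        · by_contra hcon
          push_neg at hcon
          refine hPK j (by omega) (by omega) w ⟨?_, le_of_lt hcon⟩ hwK
          have := (hPb j).1
          linarith
      have hzr : w ≤ W (j+1) - P (j+1) := by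
        by_cases h0 : j+1 = n
        · rw [h0, hWn, hPn]
          have := hwI.2
          linarith
        · by_contra hcon
          push_neg at hcon
          refine hPK (j+1) (by omega) (by omega) w ⟨le_of_lt hcon, ?_⟩ hwK
          have := (hPb (j+1)).1
          linarith
      refine ⟨j, hjn, ?_, ?_⟩
      · calc c j = g (A (2*j)) := by rw [hgnode (2*j) (by omega), hYE]
        _ ≤ g w := hgmono (by rw [hAE]; exact hzl)
      · calc (g w : ℝ) ≤ g (A (2*j+1)) := hgmono (by rw [hAO]; exact hzr)
        _ = c j + lam := by rw [hgnode (2*j+1) (by omega), hYO]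
    obtain ⟨p, hp, hp1, hp2⟩ := himg x hx1
    obtain ⟨Q, hQ, hq1, hq2⟩ := himg (x+dd) hx2
    obtain ⟨R, hR, hr1, hr2⟩ := himg (x+2*dd) hx3
    have hεdd : 0 < dd := lt_of_lt_of_le hε hdd
    have hpq : p < Q := by
      rcases lt_trichotomy p Q with h | h | h
      · exact h
      · exfalso
        rw [← h] at hq1 hq2
        linarith
      · exfalso
        have := hcsep Q p h (by omega)
        linarith
    have hqr : Q < R := by
      rcases lt_trichotomy Q R with h | h | h
      · exact h
      · exfalso
        rw [← h] at hr1 hr2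
        linarith
      · exfalso
        have := hcsep R Q h (by omega)
        linarith
    have hne : rep p ≠ rep R :=
      ne_of_lt (seqLt (N := n-1) (fun s hs => by linarith [hrepgap s hs]) p R
        (by omega) (by omega))
    have hmarg := hmargin (rep p) (hrepT p hp) (rep Q) (hrepT Q hQ)
      (rep R) (hrepT R hR) hne
    have e1 := abs_le.1 (hcrep p hp)
    have e2 := abs_le.1 (hcrep Q hQ)
    have e3 := abs_le.1 (hcrep R hR)
    have hcap := abs_le.1 (show |c p + c R - 2*c Q| ≤ 2*lam from
      abs_le.2 ⟨by linarith, by linarith⟩)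
    have hfinal : |rep p + rep R - 2*rep Q| ≤ 6*lam :=
      abs_le.2 ⟨by linarith [e1.1, e1.2, e2.1, e2.2, e3.1, e3.2, hcap.1, hcap.2],
        by linarith [e1.1, e1.2, e2.1, e2.2, e3.1, e3.2, hcap.1, hcap.2]⟩
    linarith

end AuxiliaryLemmas

/-- For nowhere dense `C ⊆ [0,1]` and `ε > 0`, the set `H_ε(C)` contains a dense open
subset of `H⁺`; in particular `H_ε(C)` is residual in `H⁺`. -/
theorem Heps_contains_dense_open (C : Set ℝ) (hC : C ⊆ Set.Icc 0 1)
    (hnd : IsNowhereDense C) (ε : ℝ) (hε : 0 < ε) :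
    (∃ U : Set ↥Hplus, IsOpen U ∧ Dense U ∧ U ⊆ Heps C ε) ∧ IsMeagre (Heps C ε)ᶜ := by
  set K : Set ℝ := closure C with hK_def
  have hK : IsClosed K := isClosed_closure
  have hKsub : K ⊆ Set.Icc 0 1 := closure_minimal hC isClosed_Icc
  have hKnd : interior K = ∅ := hnd
  set U : Set ↥Hplus := {φ | ¬ ∃ x d : ℝ, ε ≤ d ∧ x ∈ imgC φ.1 K ∧ x + d ∈ imgC φ.1 K ∧
    x + 2*d ∈ imgC φ.1 K} with hU_def
  have hUopen : IsOpen U := open_step K hK ε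
  have hUdense : Dense U := by
    rw [Metric.dense_iff]
    intro φ₀ ρ hρ
    obtain ⟨φ, h1, h2⟩ := density_step K hK hKsub hKnd ε hε φ₀ ρ hρ
    exact ⟨φ, Metric.mem_ball.2 h1, h2⟩
  have hUsub : U ⊆ Heps C ε := by
    intro φ hφ
    rintro ⟨x, d, hd, h1, h2, h3⟩
    have hmono : imgC φ.1 C ⊆ imgC φ.1 K :=
      Set.image_mono (Set.preimage_mono subset_closure)
    exact hφ ⟨x, d, hd, hmono h1, hmono h2, hmono h3⟩
  refine ⟨⟨U, hUopen, hUdense, hUsub⟩, ?_⟩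
  have hres : Heps C ε ∈ residual _ :=
    Filter.mem_of_superset (residual_of_dense_open hUopen hUdense) hUsub
  rw [IsMeagre, compl_compl]
  exact hres
end
end
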